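/- arXiv:1602.06751 — 5 statements merged into one kernel-verified Lean document; each statement's English description precedes it below -/
import Mathlib

section
/- Let v, k, t be integers with v > k > t ≥ 2, let X be a v-set and X = X1 ∪ X2 a partition of X with |X1| = v1 and |X2| = v2. For i = 0,…,t let D_i = (X1, 𝓑^(i)) be the complete i-(v1, i, 1) design (whose blocks are all i-subsets of X1), and for i = t+1,…,k let D_i = (X1, 𝓑^(i)) be a simple t-(v1, i, λ^(i)_t) design; for 0 ≤ s ≤ t let λ^(i)_s denote the number of blocks of D_i containing any fixed s-subset of X1 (so D_i is also an s-(v1, i, λ^(i)_s) design). Similarly, for i = 0,…,t let D̄_i = (X2, 𝓑̄^(i)) be the complete i-(v2, i, 1) design, for i = t+1,…,k let D̄_i = (X2, 𝓑̄^(i)) be a simple t-(v2, i, λ̄^(i)_t) design, and let λ̄^(i)_s be defined analogously. For i = 0,…,k set 𝓑_(i,k−i) = { B_i ∪ B̄_{k−i} : B_i ∈ 𝓑^(i), B̄_{k−i} ∈ 𝓑̄^(k−i) }. Let u_0,…,u_k ∈ {0,1} and let 𝓑 be the union over i = 0,…,k of those 𝓑_(i,k−i) with u_i = 1. For s = 0,…,t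 define L_{s,t−s} = Σ_{i=0}^{k} u_i · λ^(i)_s · λ̄^(k−i)_{t−s}. If L_{0,t} = L_{1,t−1} = ⋯ = L_{t,0} = Λ for a positive integer Λ, then (X, 𝓑) is a simple t-(v, k, Λ) design. -/
/-- **Recursive construction of simple t-designs** (Theorem 1 of the paper).
Given a partition `X = X1 ∪ X2` of a `v`-set, ingredient designs `A i` on `X1`
(complete `i-(v1,i,1)` designs for `i ≤ t`, simple `t-(v1,i,λ^(i)_t)` designs
for `t < i ≤ k`, with `s`-level indices `lam i s`), analogous ingredient
designs `Abar i` on `X2` with indices `lamBar i s`, and selectors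
`u i ∈ {0,1}`, if all the quantities
`L_{s,t-s} = Σ_{i=0}^k u i * lam i s * lamBar (k-i) (t-s)` are equal to a
positive integer `Λ`, then the union `𝓑` of the selected block sets
`𝓑_(i,k-i) = {B ∪ B̄ : B ∈ A i, B̄ ∈ Abar (k-i)}` forms a simple
`t-(v,k,Λ)` design on `X`. (Simplicity is expressed by `𝓑` being a
`Finset`, i.e. a set of distinct blocks.) -/
theorem recursive_construction_simple_t_design
    (v k t v1 v2 : ℕ) (hvk : v > k) (hkt : k > t) (ht : 2 ≤ t)
    (X X1 X2 : Finset ℕ)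
    (hXcard : X.card = v) (hX1card : X1.card = v1) (hX2card : X2.card = v2)
    (hunion : X1 ∪ X2 = X) (hdisj : Disjoint X1 X2)
    (A Abar : ℕ → Finset (Finset ℕ))
    (lam lamBar : ℕ → ℕ → ℕ)
    -- the blocks of `A i` are `i`-subsets of `X1`, those of `Abar i` are
    -- `i`-subsets of `X2`
    (hAblocks : ∀ i ≤ k, ∀ b ∈ A i, b ⊆ X1 ∧ b.card = i)
    (hAbarblocks : ∀ i ≤ k, ∀ b ∈ Abar i, b ⊆ X2 ∧ b.card = i)
    -- for `i ≤ t` the ingredient designs are the complete `i-(v_j, i, 1)` designs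
    (hAcomplete : ∀ i ≤ t, A i = X1.powersetCard i)
    (hAbarcomplete : ∀ i ≤ t, Abar i = X2.powersetCard i)
    -- `lam i s` is the number of blocks of `A i` containing any fixed `s`-subset
    -- of `X1` (so `A i` is an `s-(v1, i, lam i s)` design), `0 ≤ s ≤ t`
    (hlam : ∀ i ≤ k, ∀ s ≤ t, ∀ S ⊆ X1, S.card = s →
      ((A i).filter (fun b => S ⊆ b)).card = lam i s)
    (hlamBar : ∀ i ≤ k, ∀ s ≤ t, ∀ S ⊆ X2, S.card = s →
      ((Abar i).filter (fun b => S ⊆ b)).card = lamBar i s)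
    (u : ℕ → ℕ) (hu : ∀ i ≤ k, u i = 0 ∨ u i = 1)
    (Λ : ℕ) (hΛ : 0 < Λ)
    -- the equalities L_{0,t} = L_{1,t-1} = ⋯ = L_{t,0} = Λ
    (hL : ∀ s ≤ t, (∑ i ∈ Finset.range (k + 1),
      u i * (lam i s * lamBar (k - i) (t - s))) = Λ) :
    (∀ b ∈ (Finset.range (k + 1)).biUnion (fun i =>
        if u i = 1 then ((A i) ×ˢ (Abar (k - i))).image (fun p => p.1 ∪ p.2)
        else ∅),
      b ⊆ X ∧ b.card = k) ∧
    (∀ T ⊆ X, T.card = t →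
      (((Finset.range (k + 1)).biUnion (fun i =>
        if u i = 1 then ((A i) ×ˢ (Abar (k - i))).image (fun p => p.1 ∪ p.2)
        else ∅)).filter (fun b => T ⊆ b)).card = Λ) := by

  have hX1X : X1 ⊆ X := hunion ▸ Finset.subset_union_left
  have hX2X : X2 ⊆ X := hunion ▸ Finset.subset_union_right
  set f : ℕ → Finset (Finset ℕ) := fun i =>
    if u i = 1 then ((A i) ×ˢ (Abar (k - i))).image (fun p => p.1 ∪ p.2) else ∅ with hf
  -- key structure lemma about members of f i
  have hmem : ∀ i < k + 1, ∀ b ∈ f i,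
      b ⊆ X ∧ b.card = k ∧ (b ∩ X1).card = i := by
    intro i hi b hb
    simp only [hf] at hb
    split_ifs at hb with hui
    · simp only [Finset.mem_image, Finset.mem_product] at hb
      obtain ⟨⟨B, Bb⟩, ⟨hB, hBb⟩, rfl⟩ := hb
      obtain ⟨hB1, hBc⟩ := hAblocks i (by omega) B hB
      obtain ⟨hB2, hBbc⟩ := hAbarblocks (k - i) (by omega) Bb hBb
      have hdBB : Disjoint B Bb := hdisj.mono hB1 hB2
      have hcap : (B ∪ Bb) ∩ X1 = B := by
        rw [Finset.union_inter_distrib_right, Finset.inter_eq_left.mpr hB1,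
          Finset.disjoint_iff_inter_eq_empty.mp (hdisj.symm.mono_left hB2), Finset.union_empty]
      refine ⟨Finset.union_subset (hB1.trans hX1X) (hB2.trans hX2X), ?_, ?_⟩
      · rw [Finset.card_union_of_disjoint hdBB, hBc, hBbc]; omega
      · rw [hcap, hBc]
    · exact absurd hb (Finset.notMem_empty b)
  constructor
  · intro b hb
    simp only [Finset.mem_biUnion, Finset.mem_range] at hb
    obtain ⟨i, hi, hbi⟩ := hb
    exact ⟨(hmem i hi b hbi).1, (hmem i hi b hbi).2.1⟩
  · intro T hT hTcard
    have hT1 : T ∩ X1 ⊆ X1 := Finset.inter_subset_right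
    have hT2 : T ∩ X2 ⊆ X2 := Finset.inter_subset_right
    have hsplit : T = (T ∩ X1) ∪ (T ∩ X2) := by
      rw [← Finset.inter_union_distrib_left, hunion]
      exact (Finset.inter_eq_left.mpr hT).symm
    have hdisjT : Disjoint (T ∩ X1) (T ∩ X2) := hdisj.mono hT1 hT2
    set s := (T ∩ X1).card with hs
    have hcards : s + (T ∩ X2).card = t := by
      rw [hs, ← Finset.card_union_of_disjoint hdisjT, ← hsplit, hTcard]
    have hst : s ≤ t := by omega
    have hT2card : (T ∩ X2).card = t - s := by omega
    rw [Finset.filter_biUnion, Finset.card_biUnion, ← hL s hst]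
    · apply Finset.sum_congr rfl
      intro i hi
      rw [Finset.mem_range] at hi
      by_cases hui : u i = 1
      · have hfi : f i = ((A i) ×ˢ (Abar (k - i))).image (fun p => p.1 ∪ p.2) := by
          simp [hf, hui]
        rw [hfi, hui, one_mul]
        have hinj : Set.InjOn (fun p : Finset ℕ × Finset ℕ => p.1 ∪ p.2)
            ↑((A i) ×ˢ (Abar (k - i))) := by
          intro p hp q hq hpq
          simp only [Finset.mem_coe, Finset.mem_product] at hp hq
          obtain ⟨hp11, hp1c⟩ := hAblocks i (by omega) p.1 hp.1
          obtain ⟨hp21, _⟩ := hAbarblocks (k - i) (by omega) p.2 hp.2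
          obtain ⟨hq11, _⟩ := hAblocks i (by omega) q.1 hq.1
          obtain ⟨hq21, _⟩ := hAbarblocks (k - i) (by omega) q.2 hq.2
          have key : ∀ (B Bb : Finset ℕ), B ⊆ X1 → Bb ⊆ X2 → (B ∪ Bb) ∩ X1 = B := by
            intro B Bb hB hBb
            rw [Finset.union_inter_distrib_right, Finset.inter_eq_left.mpr hB,
              Finset.disjoint_iff_inter_eq_empty.mp (hdisj.symm.mono_left hBb),
              Finset.union_empty]
          have key2 : ∀ (B Bb : Finset ℕ), B ⊆ X1 → Bb ⊆ X2 → (B ∪ Bb) ∩ X2 = Bb := by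
            intro B Bb hB hBb
            rw [Finset.union_inter_distrib_right, Finset.inter_eq_left.mpr hBb,
              Finset.disjoint_iff_inter_eq_empty.mp (hdisj.mono_left hB),
              Finset.empty_union]
          have h1 : p.1 = q.1 := by
            rw [← key p.1 p.2 hp11 hp21, ← key q.1 q.2 hq11 hq21]
            simp only at hpq
            rw [hpq]
          have h2 : p.2 = q.2 := by
            rw [← key2 p.1 p.2 hp11 hp21, ← key2 q.1 q.2 hq11 hq21]
            simp only at hpq
            rw [hpq]
          exact Prod.ext h1 h2
        have heq : (((A i) ×ˢ (Abar (k - i))).image (fun p => p.1 ∪ p.2)).filter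
            (fun b => T ⊆ b)
            = (((A i) ×ˢ (Abar (k - i))).filter
                (fun p => T ⊆ p.1 ∪ p.2)).image (fun p => p.1 ∪ p.2) := by
          rw [Finset.filter_image]
        rw [heq, Finset.card_image_of_injOn
          (hinj.mono (Finset.coe_subset.mpr (Finset.filter_subset _ _)))]
        have heq2 : ((A i) ×ˢ (Abar (k - i))).filter (fun p => T ⊆ p.1 ∪ p.2)
            = ((A i) ×ˢ (Abar (k - i))).filter
                (fun p => (T ∩ X1 ⊆ p.1) ∧ (T ∩ X2 ⊆ p.2)) := by
          apply Finset.filter_congr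
          intro p hp
          simp only [Finset.mem_product] at hp
          obtain ⟨hp11, _⟩ := hAblocks i (by omega) p.1 hp.1
          obtain ⟨hp21, _⟩ := hAbarblocks (k - i) (by omega) p.2 hp.2
          constructor
          · intro hTp
            constructor
            · intro x hx
              have hx1 : x ∈ X1 := (Finset.mem_inter.mp hx).2
              have hxp : x ∈ p.1 ∪ p.2 := hTp (Finset.mem_inter.mp hx).1
              rcases Finset.mem_union.mp hxp with h | h
              · exact h
              · exact absurd (hp21 h) (Finset.disjoint_left.mp hdisj hx1)
            · intro x hx
              have hx2 : x ∈ X2 := (Finset.mem_inter.mp hx).2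
              have hxp : x ∈ p.1 ∪ p.2 := hTp (Finset.mem_inter.mp hx).1
              rcases Finset.mem_union.mp hxp with h | h
              · exact absurd (hp11 h) (Finset.disjoint_right.mp hdisj hx2)
              · exact h
          · intro ⟨h1, h2⟩
            rw [hsplit]
            exact Finset.union_subset_union h1 h2
        rw [heq2, Finset.filter_product, Finset.card_product,
          hlam i (by omega) s hst (T ∩ X1) hT1 rfl,
          hlamBar (k - i) (by omega) (t - s) (by omega) (T ∩ X2) hT2 hT2card]
      · have hu0 : u i = 0 := (hu i (by omega)).resolve_right hui
        have : f i = ∅ := by simp [hf, hu0]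
        simp [this, hu0]
    · intro i hi j hj hij
      simp only [Finset.mem_coe, Finset.mem_range] at hi hj
      apply Finset.disjoint_left.mpr
      intro b hb hb'
      have h1 := (hmem i hi b (Finset.mem_of_mem_filter b hb)).2.2
      have h2 := (hmem j hj b (Finset.mem_of_mem_filter b hb')).2.2
      omega
end

section
/- Let v > k > t ≥ 2 and let X = X1 ∪ X2 be a partition of a v-set X with |X1| = v1, |X2| = v2. For i = 0,…,t let D_i be the complete i-(v1,i,1) design on X1 and for i = t+1,…,k let D_i be a (possibly non-simple) t-(v1, i, λ^(i)_t) design, i.e. a multiset 𝓑^(i) of i-subsets of X1 in which every t-subset of X1 occurs with total multiplicity λ^(i)_t; define D̄_i on X2 analogously with indices λ̄^(i)_t, and let λ^(i)_s, λ̄^(i)_s denote the corresponding s-level indices for 0 ≤ s ≤ t. Let u_0,…,u_k ∈ {0,1} and let 𝓑 be the multiset union over i with u_i = 1 of the multisets { B_i ∪ B̄_{k−i} : B_i ∈ 𝓑^(i), B̄_{k−i} ∈ 𝓑̄^(k−i) } (counted with multiplicities). If L_{s,t−s} = Σ_{i=0}^{k} u_i · λ^(i)_s · λ̄^(k−i)_{t−s}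 takes the same positive integer value Λ for all s = 0,…,t, then (X, 𝓑) is a (possibly non-simple) t-(v, k, Λ) design: every t-subset of X is contained in exactly Λ blocks of 𝓑 counted with multiplicity. -/
lemma my_filter_sum {α β : Type*} [DecidableEq α] (p : β → Prop) [DecidablePred p]
    (s : Finset α) (F : α → Multiset β) :
    (∑ i ∈ s, F i).filter p = ∑ i ∈ s, (F i).filter p := by
  induction s using Finset.cons_induction with
  | empty => simp
  | cons a s ha ih => rw [Finset.sum_cons, Finset.sum_cons, Multiset.filter_add, ih]

lemma my_filter_bind {α β : Type*} (p : β → Prop) [DecidablePred p]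
    (s : Multiset α) (f : α → Multiset β) :
    (s.bind f).filter p = s.bind (fun a => (f a).filter p) := by
  induction s using Multiset.induction_on with
  | empty => simp
  | cons a s ih => simp [Multiset.cons_bind, Multiset.filter_add, ih]

lemma my_sum_map_ite {α : Type*} (q : α → Prop) [DecidablePred q] (c : ℕ)
    (m : Multiset α) :
    (m.map fun a => if q a then c else 0).sum
      = c * Multiset.card (m.filter fun a => q a) := by
  induction m using Multiset.induction_on with
  | empty => simp
  | cons a s ih =>
    rw [Multiset.map_cons, Multiset.sum_cons, ih, Multiset.filter_cons]
    split_ifs with h <;> simp <;> ring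

/-- Multiset (possibly non-simple) version of the recursive construction:
with ingredient designs given as multisets `A i` of `i`-subsets of `X1`
(complete for `i ≤ t`) with `s`-level indices `lam i s`, analogous
multisets `Abar i` on `X2` with indices `lamBar i s`, and selectors
`u i ∈ {0,1}`, if all the quantities
`L_{s,t-s} = Σ_{i=0}^k u i * lam i s * lamBar (k-i) (t-s)` equal a positive
integer `Λ`, then the multiset union `𝓑` of the selected combined block
multisets is a (possibly non-simple) `t-(v,k,Λ)` design: every `t`-subset of
`X` is contained in exactly `Λ` blocks counted with multiplicity. -/
theorem recursive_construction_nonsimple_t_design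
    (v k t v1 v2 : ℕ) (hvk : v > k) (hkt : k > t) (ht : 2 ≤ t)
    (X X1 X2 : Finset ℕ)
    (hXcard : X.card = v) (hX1card : X1.card = v1) (hX2card : X2.card = v2)
    (hunion : X1 ∪ X2 = X) (hdisj : Disjoint X1 X2)
    (A Abar : ℕ → Multiset (Finset ℕ))
    (lam lamBar : ℕ → ℕ → ℕ)
    (hAblocks : ∀ i ≤ k, ∀ b ∈ A i, b ⊆ X1 ∧ b.card = i)
    (hAbarblocks : ∀ i ≤ k, ∀ b ∈ Abar i, b ⊆ X2 ∧ b.card = i)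
    (hAcomplete : ∀ i ≤ t, A i = (X1.powersetCard i).val)
    (hAbarcomplete : ∀ i ≤ t, Abar i = (X2.powersetCard i).val)
    -- every `s`-subset of `X1` occurs in exactly `lam i s` blocks of `A i`,
    -- counted with multiplicity, for `0 ≤ s ≤ t`
    (hlam : ∀ i ≤ k, ∀ s ≤ t, ∀ S ⊆ X1, S.card = s →
      Multiset.card ((A i).filter (fun b => S ⊆ b)) = lam i s)
    (hlamBar : ∀ i ≤ k, ∀ s ≤ t, ∀ S ⊆ X2, S.card = s →
      Multiset.card ((Abar i).filter (fun b => S ⊆ b)) = lamBar i s)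
    (u : ℕ → ℕ) (hu : ∀ i ≤ k, u i = 0 ∨ u i = 1)
    (Λ : ℕ) (hΛ : 0 < Λ)
    (hL : ∀ s ≤ t, (∑ i ∈ Finset.range (k + 1),
      u i * (lam i s * lamBar (k - i) (t - s))) = Λ) :
    (∀ b ∈ (∑ i ∈ Finset.range (k + 1),
        u i • ((A i).bind (fun b1 => (Abar (k - i)).map (fun b2 => b1 ∪ b2)))),
      b ⊆ X ∧ b.card = k) ∧
    (∀ T ⊆ X, T.card = t →
      Multiset.card
        ((∑ i ∈ Finset.range (k + 1),
          u i • ((A i).bind (fun b1 => (Abar (k - i)).map (fun b2 => b1 ∪ b2)))).filter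
          (fun b => T ⊆ b)) = Λ) := by
  constructor
  · intro b hb
    rw [Multiset.mem_sum] at hb
    obtain ⟨i, hi, hbi⟩ := hb
    rw [Finset.mem_range, Nat.lt_succ_iff] at hi
    have hbm := Multiset.mem_of_mem_nsmul hbi
    rw [Multiset.mem_bind] at hbm
    obtain ⟨b1, hb1, hbm⟩ := hbm
    rw [Multiset.mem_map] at hbm
    obtain ⟨b2, hb2, rfl⟩ := hbm
    obtain ⟨hb1X, hb1c⟩ := hAblocks i hi b1 hb1
    obtain ⟨hb2X, hb2c⟩ := hAbarblocks (k - i) (Nat.sub_le k i) b2 hb2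
    have hsub : b1 ∪ b2 ⊆ X := by
      rw [← hunion]; exact Finset.union_subset_union hb1X hb2X
    refine ⟨hsub, ?_⟩
    rw [Finset.card_union_of_disjoint (hdisj.mono hb1X hb2X),
      hb1c, hb2c, Nat.add_sub_cancel' hi]
  · intro T hT hTcard
    set T1 := T ∩ X1 with hT1
    set T2 := T ∩ X2 with hT2
    set s := T1.card with hs
    have hT1sub : T1 ⊆ X1 := Finset.inter_subset_right
    have hT2sub : T2 ⊆ X2 := Finset.inter_subset_right
    have hTsplit : T1 ∪ T2 = T := by
      rw [hT1, hT2, ← Finset.inter_union_distrib_left, hunion,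
        Finset.inter_eq_left.mpr hT]
    have hTdisj : Disjoint T1 T2 := hdisj.mono hT1sub hT2sub
    have hst : s ≤ t := by
      rw [← hTcard]; exact Finset.card_le_card (hTsplit ▸ Finset.subset_union_left)
    have hT2card : T2.card = t - s := by
      have := Finset.card_union_of_disjoint hTdisj
      rw [hTsplit, hTcard] at this
      omega
    have hkey : ∀ T' b1 b2 : Finset ℕ, b1 ⊆ X1 → b2 ⊆ X2 → T' ⊆ X →
        ((T' ⊆ b1 ∪ b2) ↔ (T' ∩ X1 ⊆ b1 ∧ T' ∩ X2 ⊆ b2)) := by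
      intro T' b1 b2 h1 h2 hT'
      constructor
      · intro h
        constructor
        · intro x hx
          rw [Finset.mem_inter] at hx
          rcases Finset.mem_union.mp (h hx.1) with h' | h'
          · exact h'
          · exact absurd (hdisj.forall_ne_finset hx.2 (h2 h')) (fun hne => hne rfl)
        · intro x hx
          rw [Finset.mem_inter] at hx
          rcases Finset.mem_union.mp (h hx.1) with h' | h'
          · exact absurd (hdisj.forall_ne_finset (h1 h') hx.2) (fun hne => hne rfl)
          · exact h'
      · intro ⟨ha, hb⟩ x hx
        have : x ∈ X1 ∪ X2 := hunion ▸ hT' hx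
        rcases Finset.mem_union.mp this with h' | h'
        · exact Finset.mem_union_left _ (ha (Finset.mem_inter.mpr ⟨hx, h'⟩))
        · exact Finset.mem_union_right _ (hb (Finset.mem_inter.mpr ⟨hx, h'⟩))
    rw [my_filter_sum]
    have hcard : ∀ i ≤ k,
        Multiset.card ((u i • ((A i).bind
          (fun b1 => (Abar (k - i)).map (fun b2 => b1 ∪ b2)))).filter (fun b => T ⊆ b))
        = u i * (lam i s * lamBar (k - i) (t - s)) := by
      intro i hi
      rw [Multiset.filter_nsmul, Multiset.card_nsmul]
      congr 1
      rw [my_filter_bind, Multiset.card_bind]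
      have hmapeq : ((A i).map
          (Multiset.card ∘ fun b1 => ((Abar (k - i)).map (fun b2 => b1 ∪ b2)).filter
            (fun b => T ⊆ b)))
          = (A i).map (fun b1 => if T1 ⊆ b1 then lamBar (k - i) (t - s) else 0) := by
        apply Multiset.map_congr rfl
        intro b1 hb1
        obtain ⟨hb1X, _⟩ := hAblocks i hi b1 hb1
        simp only [Function.comp_apply]
        rw [← Multiset.countP_eq_card_filter, Multiset.countP_map]
        have : ∀ b2 ∈ Abar (k - i), (T ⊆ b1 ∪ b2) ↔ (T1 ⊆ b1 ∧ T2 ⊆ b2) := by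
          intro b2 hb2
          exact hkey T b1 b2 hb1X (hAbarblocks (k - i) (Nat.sub_le k i) b2 hb2).1 hT
        rw [Multiset.filter_congr this]
        by_cases h : T1 ⊆ b1
        · rw [if_pos h,
            Multiset.filter_congr (fun b2 _ => by simp [h] :
              ∀ b2 ∈ Abar (k - i), ((T1 ⊆ b1 ∧ T2 ⊆ b2) ↔ T2 ⊆ b2))]
          exact hlamBar (k - i) (Nat.sub_le k i) (t - s) (Nat.sub_le t s) T2 hT2sub hT2card
        · rw [if_neg h, Multiset.filter_eq_nil.mpr (fun b2 _ hc => h hc.1)]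
          simp
      rw [hmapeq, my_sum_map_ite, hlam i hi s hst T1 hT1sub rfl, mul_comm]
    calc Multiset.card (∑ i ∈ Finset.range (k + 1),
          (u i • ((A i).bind (fun b1 => (Abar (k - i)).map (fun b2 => b1 ∪ b2)))).filter
            (fun b => T ⊆ b))
        = ∑ i ∈ Finset.range (k + 1),
          Multiset.card ((u i • ((A i).bind
            (fun b1 => (Abar (k - i)).map (fun b2 => b1 ∪ b2)))).filter (fun b => T ⊆ b)) := by
          exact Multiset.card_sum _ _
      _ = ∑ i ∈ Finset.range (k + 1), u i * (lam i s * lamBar (k - i) (t - s)) := by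
          apply Finset.sum_congr rfl
          intro i hi
          exact hcard i (Nat.lt_succ_iff.mp (Finset.mem_range.mp hi))
      _ = Λ := hL s hst
end

section
/- Suppose there exist simple 4-(17,5,13), 4-(17,7,264) and 4-(17,8,320) designs, and simple 4-(18,5,14), 4-(18,7,336) and 4-(18,8,448) designs. Then there exists a simple 4-(35, 8, 15680) design (note 15680 = 448 × 35). -/
/-- `SimpleDesignExists t v k lam` asserts the existence of a simple
`t-(v, k, lam)` design: a `v`-set `X` together with a set `B` of distinct
`k`-element subsets of `X` (blocks) such that every `t`-element subset of `X`
is contained in exactly `lam` blocks. -/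
def SimpleDesignExists (t v k lam : ℕ) : Prop :=
  ∃ (X : Finset ℕ) (B : Finset (Finset ℕ)),
    X.card = v ∧
    (∀ b ∈ B, b ⊆ X ∧ b.card = k) ∧
    (∀ T ⊆ X, T.card = t → (B.filter (fun b => T ⊆ b)).card = lam)

open Finset

/-- Number of `k`-subsets of `X` containing a fixed subset `A`. -/
lemma complete_count (X A : Finset ℕ) (k : ℕ) (hA : A ⊆ X) (hak : A.card ≤ k) :
    ((X.powersetCard k).filter (fun b => A ⊆ b)).card
      = (X.card - A.card).choose (k - A.card) := by
  rw [← Finset.card_sdiff_of_subset hA, ← Finset.card_powersetCard]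
  apply Finset.card_bij (fun b _ => b \ A)
  · intro b hb
    simp only [Finset.mem_filter, Finset.mem_powersetCard] at hb ⊢
    exact ⟨Finset.sdiff_subset_sdiff hb.1.1 (Finset.Subset.refl A),
      by rw [Finset.card_sdiff_of_subset hb.2, hb.1.2]⟩
  · intro b1 hb1 b2 hb2 h
    simp only [Finset.mem_filter, Finset.mem_powersetCard] at hb1 hb2
    have : b1 \ A ∪ A = b2 \ A ∪ A := by rw [h]
    rwa [Finset.sdiff_union_of_subset hb1.2, Finset.sdiff_union_of_subset hb2.2] at this
  · intro c hc
    simp only [Finset.mem_powersetCard] at hc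
    refine ⟨c ∪ A, ?_, ?_⟩
    · simp only [Finset.mem_filter, Finset.mem_powersetCard]
      have hcA : Disjoint c A := Finset.disjoint_left.2 fun x hx =>
        (Finset.mem_sdiff.1 (hc.1 hx)).2
      refine ⟨⟨Finset.union_subset (hc.1.trans Finset.sdiff_subset) hA, ?_⟩,
        Finset.subset_union_right⟩
      rw [Finset.card_union_of_disjoint hcA, hc.2]
      have := Finset.card_le_card hA
      omega
    · have hcA : Disjoint c A := Finset.disjoint_left.2 fun x hx =>
        (Finset.mem_sdiff.1 (hc.1 hx)).2
      rw [Finset.union_sdiff_right, Finset.sdiff_eq_self_of_disjoint hcA]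

lemma complete_count_zero (X A : Finset ℕ) (k : ℕ) (hak : k < A.card) :
    ((X.powersetCard k).filter (fun b => A ⊆ b)).card = 0 := by
  rw [Finset.card_eq_zero, Finset.filter_eq_empty_iff]
  intro b hb hAb
  rw [Finset.mem_powersetCard] at hb
  have := Finset.card_le_card hAb
  omega

/-- A 4-design is a 3-design: step-down counting. -/
lemma stepdown (X : Finset ℕ) (B : Finset (Finset ℕ)) (k lam mu : ℕ)
    (hB : ∀ b ∈ B, b ⊆ X ∧ b.card = k)
    (hc : ∀ T ⊆ X, T.card = 4 → (B.filter (fun b => T ⊆ b)).card = lam)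
    (A : Finset ℕ) (hA : A ⊆ X) (hA3 : A.card = 3) (hk : 4 ≤ k)
    (heq : (k - 3) * mu = (X.card - 3) * lam) :
    (B.filter (fun b => A ⊆ b)).card = mu := by
  have key : (k - 3) * (B.filter (fun b => A ⊆ b)).card = (X.card - 3) * lam := by
    have h1 : ∀ b ∈ B.filter (fun b => A ⊆ b),
        ((X \ A).filter (fun x => x ∈ b)).card = k - 3 := by
      intro b hb
      rw [Finset.mem_filter] at hb
      obtain ⟨hbX, hbk⟩ := hB b hb.1
      have : (X \ A).filter (fun x => x ∈ b) = b \ A := by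
        ext x
        simp only [Finset.mem_filter, Finset.mem_sdiff]
        exact ⟨fun h => ⟨h.2, h.1.2⟩, fun h => ⟨⟨hbX h.1, h.2⟩, h.1⟩⟩
      rw [this, Finset.card_sdiff_of_subset hb.2, hbk, hA3]
    have h2 : ∑ b ∈ B.filter (fun b => A ⊆ b), ((X \ A).filter (fun x => x ∈ b)).card
        = (k - 3) * (B.filter (fun b => A ⊆ b)).card := by
      rw [Finset.sum_congr rfl h1, Finset.sum_const, smul_eq_mul, mul_comm]
    rw [← h2]
    have h3 : ∑ b ∈ B.filter (fun b => A ⊆ b), ((X \ A).filter (fun x => x ∈ b)).card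
        = ∑ x ∈ X \ A, ((B.filter (fun b => A ⊆ b)).filter (fun b => x ∈ b)).card := by
      simp only [Finset.card_filter]
      exact Finset.sum_comm
    rw [h3]
    have h4 : ∀ x ∈ X \ A,
        ((B.filter (fun b => A ⊆ b)).filter (fun b => x ∈ b)).card = lam := by
      intro x hx
      rw [Finset.mem_sdiff] at hx
      rw [Finset.filter_filter]
      have : (B.filter fun b => A ⊆ b ∧ x ∈ b) = B.filter (fun b => insert x A ⊆ b) := by
        apply Finset.filter_congr
        intro b _
        simp [Finset.insert_subset_iff, and_comm]
      rw [this]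
      exact hc (insert x A) (Finset.insert_subset hx.1 hA)
        (by rw [Finset.card_insert_of_notMem hx.2, hA3])
    rw [Finset.sum_congr rfl h4, Finset.sum_const, smul_eq_mul,
      Finset.card_sdiff_of_subset hA, hA3]
  have hk3 : 0 < k - 3 := by omega
  exact Nat.eq_of_mul_eq_mul_left hk3 (key.trans heq.symm)

/-- Transfer a design onto any ground set of the right cardinality. -/
lemma transfer {t v k lam : ℕ} (h : SimpleDesignExists t v k lam)
    (X' : Finset ℕ) (hX' : X'.card = v) :
    ∃ B' : Finset (Finset ℕ),
      (∀ b ∈ B', b ⊆ X' ∧ b.card = k) ∧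
      (∀ T ⊆ X', T.card = t → (B'.filter (fun b => T ⊆ b)).card = lam) := by
  obtain ⟨X, B, hX, hB, hcount⟩ := h
  have hcard : X.card = X'.card := by rw [hX, hX']
  let e : (X : Finset ℕ) ≃ (X' : Finset ℕ) := Finset.equivOfCardEq hcard
  classical
  let f : ℕ → ℕ := fun x => if hx : x ∈ X then (e ⟨x, hx⟩ : ℕ) else 0
  let g : ℕ → ℕ := fun y => if hy : y ∈ X' then (e.symm ⟨y, hy⟩ : ℕ) else 0
  have hfX : ∀ x ∈ X, f x ∈ X' := by
    intro x hx; simp only [f, dif_pos hx]; exact (e ⟨x, hx⟩).2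
  have hgX : ∀ y ∈ X', g y ∈ X := by
    intro y hy; simp only [g, dif_pos hy]; exact (e.symm ⟨y, hy⟩).2
  have hgf : ∀ x ∈ X, g (f x) = x := by
    intro x hx
    simp only [f, dif_pos hx, g, dif_pos ((e ⟨x, hx⟩).2)]
    have : (⟨(e ⟨x, hx⟩ : ℕ), (e ⟨x, hx⟩).2⟩ : (X' : Finset ℕ)) = e ⟨x, hx⟩ := rfl
    rw [this, Equiv.symm_apply_apply]
  have hfg : ∀ y ∈ X', f (g y) = y := by
    intro y hy
    simp only [g, dif_pos hy, f, dif_pos ((e.symm ⟨y, hy⟩).2)]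
    have : (⟨(e.symm ⟨y, hy⟩ : ℕ), (e.symm ⟨y, hy⟩).2⟩ : (X : Finset ℕ)) = e.symm ⟨y, hy⟩ := rfl
    rw [this, Equiv.apply_symm_apply]
  have hfinj : Set.InjOn f X := fun a ha b hb hab => by
    rw [← hgf a ha, ← hgf b hb, hab]
  refine ⟨B.image (fun b => b.image f), ?_, ?_⟩
  · intro b' hb'
    obtain ⟨b, hb, rfl⟩ := Finset.mem_image.1 hb'
    obtain ⟨hbX, hbk⟩ := hB b hb
    constructor
    · intro y hy
      obtain ⟨x, hx, rfl⟩ := Finset.mem_image.1 hy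
      exact hfX x (hbX hx)
    · rw [Finset.card_image_of_injOn (hfinj.mono (by exact_mod_cast hbX)), hbk]
  · intro T' hT' hT't
    set T : Finset ℕ := T'.image g with hTdef
    have hginj : Set.InjOn g X' := fun a ha b hb hab => by
      rw [← hfg a ha, ← hfg b hb, hab]
    have hTX : T ⊆ X := by
      intro x hx
      obtain ⟨y, hy, rfl⟩ := Finset.mem_image.1 hx
      exact hgX y (hT' hy)
    have hTt : T.card = t := by
      rw [hTdef, Finset.card_image_of_injOn (hginj.mono (by exact_mod_cast hT')), hT't]
    have hiff : ∀ b ∈ B, (T' ⊆ b.image f ↔ T ⊆ b) := by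
      intro b hb
      have hbX := (hB b hb).1
      constructor
      · intro hs x hx
        obtain ⟨y, hy, rfl⟩ := Finset.mem_image.1 hx
        obtain ⟨z, hz, hzy⟩ := Finset.mem_image.1 (hs hy)
        have : g y = z := by rw [← hzy, hgf z (hbX hz)]
        rwa [this]
      · intro hs y hy
        have hgy : g y ∈ b := hs (Finset.mem_image_of_mem g hy)
        have : f (g y) = y := hfg y (hT' hy)
        rw [← this]
        exact Finset.mem_image_of_mem f hgy
    have himg : (B.image (fun b => b.image f)).filter (fun b => T' ⊆ b)
        = (B.filter (fun b => T ⊆ b)).image (fun b => b.image f) := by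
      rw [Finset.filter_image]
      congr 1
      exact Finset.filter_congr hiff
    rw [himg, Finset.card_image_of_injOn, hcount T hTX hTt]
    intro b1 hb1 b2 hb2 hab
    simp only [Finset.coe_filter, Set.mem_setOf_eq] at hb1 hb2
    have h1 := (hB b1 hb1.1).1
    have h2 := (hB b2 hb2.1).1
    have hab' : b1.image f = b2.image f := hab
    ext x
    constructor
    · intro hx
      have hfx : f x ∈ b2.image f := hab' ▸ Finset.mem_image_of_mem f hx
      obtain ⟨z, hz, hzx⟩ := Finset.mem_image.1 hfx
      have := hfinj (h2 hz) (h1 hx) hzx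
      rwa [← this]
    · intro hx
      have hfx : f x ∈ b1.image f := hab'.symm ▸ Finset.mem_image_of_mem f hx
      obtain ⟨z, hz, hzx⟩ := Finset.mem_image.1 hfx
      have := hfinj (h1 hz) (h2 hx) hzx
      rwa [← this]

lemma union_inter_left {b1 b2 X' Y' : Finset ℕ} (hd : Disjoint X' Y')
    (h1 : b1 ⊆ X') (h2 : b2 ⊆ Y') : (b1 ∪ b2) ∩ X' = b1 := by
  ext x
  simp only [Finset.mem_inter, Finset.mem_union]
  constructor
  · rintro ⟨h | h, hx⟩
    · exact h
    · exact absurd (Finset.disjoint_left.1 hd hx) (fun hc => hc (h2 h))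
  · exact fun h => ⟨Or.inl h, h1 h⟩

lemma union_inter_right {b1 b2 X' Y' : Finset ℕ} (hd : Disjoint X' Y')
    (h1 : b1 ⊆ X') (h2 : b2 ⊆ Y') : (b1 ∪ b2) ∩ Y' = b2 := by
  rw [Finset.union_comm]
  exact union_inter_left hd.symm h2 h1

/-- Blocks of a product part: subsets and cardinality. -/
lemma part_blocks {X' Y' : Finset ℕ} (hd : Disjoint X' Y')
    {F G : Finset (Finset ℕ)} {i j : ℕ}
    (hF : ∀ b ∈ F, b ⊆ X' ∧ b.card = i) (hG : ∀ b ∈ G, b ⊆ Y' ∧ b.card = j) :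
    ∀ b ∈ (F ×ˢ G).image (fun p => p.1 ∪ p.2), b ⊆ X' ∪ Y' ∧ b.card = i + j := by
  intro b hb
  obtain ⟨p, hp, rfl⟩ := Finset.mem_image.1 hb
  rw [Finset.mem_product] at hp
  obtain ⟨h1, h1c⟩ := hF p.1 hp.1
  obtain ⟨h2, h2c⟩ := hG p.2 hp.2
  refine ⟨Finset.union_subset_union h1 h2, ?_⟩
  rw [Finset.card_union_of_disjoint (hd.mono h1 h2), h1c, h2c]

/-- The intersection with `X'` of a block in a part recovers the first factor's size. -/
lemma part_inter_card {X' Y' : Finset ℕ} (hd : Disjoint X' Y')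
    {F G : Finset (Finset ℕ)} {i j : ℕ}
    (hF : ∀ b ∈ F, b ⊆ X' ∧ b.card = i) (hG : ∀ b ∈ G, b ⊆ Y' ∧ b.card = j) :
    ∀ b ∈ (F ×ˢ G).image (fun p => p.1 ∪ p.2), (b ∩ X').card = i := by
  intro b hb
  obtain ⟨p, hp, rfl⟩ := Finset.mem_image.1 hb
  rw [Finset.mem_product] at hp
  obtain ⟨h1, h1c⟩ := hF p.1 hp.1
  obtain ⟨h2, h2c⟩ := hG p.2 hp.2
  rw [union_inter_left hd h1 h2, h1c]

/-- Counting blocks of a product part containing `T`. -/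
lemma part_count {X' Y' : Finset ℕ} (hd : Disjoint X' Y')
    {F G : Finset (Finset ℕ)} {i j : ℕ}
    (hF : ∀ b ∈ F, b ⊆ X' ∧ b.card = i) (hG : ∀ b ∈ G, b ⊆ Y' ∧ b.card = j)
    (T : Finset ℕ) (hT : T ⊆ X' ∪ Y') :
    (((F ×ˢ G).image (fun p => p.1 ∪ p.2)).filter (fun b => T ⊆ b)).card
      = (F.filter (fun b => T ∩ X' ⊆ b)).card * (G.filter (fun b => T ∩ Y' ⊆ b)).card := by
  classical
  have hinj : Set.InjOn (fun p : Finset ℕ × Finset ℕ => p.1 ∪ p.2)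
      ((F ×ˢ G : Finset (Finset ℕ × Finset ℕ)) : Set (Finset ℕ × Finset ℕ)) := by
    intro p hp q hq hpq
    rw [Finset.mem_coe, Finset.mem_product] at hp hq
    have e1 : (p.1 ∪ p.2) ∩ X' = p.1 :=
      union_inter_left hd (hF p.1 hp.1).1 (hG p.2 hp.2).1
    have e2 : (p.1 ∪ p.2) ∩ Y' = p.2 :=
      union_inter_right hd (hF p.1 hp.1).1 (hG p.2 hp.2).1
    have e1' : (q.1 ∪ q.2) ∩ X' = q.1 :=
      union_inter_left hd (hF q.1 hq.1).1 (hG q.2 hq.2).1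
    have e2' : (q.1 ∪ q.2) ∩ Y' = q.2 :=
      union_inter_right hd (hF q.1 hq.1).1 (hG q.2 hq.2).1
    have hpq' : p.1 ∪ p.2 = q.1 ∪ q.2 := hpq
    have : p.1 = q.1 := by rw [← e1, ← e1', hpq']
    have h2 : p.2 = q.2 := by rw [← e2, ← e2', hpq']
    exact Prod.ext this h2
  rw [Finset.filter_image]
  rw [Finset.card_image_of_injOn (hinj.mono (Finset.coe_subset.2 (Finset.filter_subset _ _)))]
  have hcong : (F ×ˢ G).filter (fun p => T ⊆ p.1 ∪ p.2)
      = (F ×ˢ G).filter (fun p => (T ∩ X' ⊆ p.1) ∧ (T ∩ Y' ⊆ p.2)) := by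
    apply Finset.filter_congr
    intro p hp
    rw [Finset.mem_product] at hp
    obtain ⟨h1, _⟩ := hF p.1 hp.1
    obtain ⟨h2, _⟩ := hG p.2 hp.2
    constructor
    · intro hs
      constructor
      · intro x hx
        rw [Finset.mem_inter] at hx
        rcases Finset.mem_union.1 (hs hx.1) with h | h
        · exact h
        · exact absurd (Finset.disjoint_left.1 hd hx.2) (fun hc => hc (h2 h))
      · intro x hx
        rw [Finset.mem_inter] at hx
        rcases Finset.mem_union.1 (hs hx.1) with h | h
        · exact absurd (Finset.disjoint_left.1 hd (h1 h)) (fun hc => hc hx.2)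
        · exact h
    · intro ⟨hs1, hs2⟩ x hx
      rcases Finset.mem_union.1 (hT hx) with h | h
      · exact Finset.mem_union_left _ (hs1 (Finset.mem_inter.2 ⟨hx, h⟩))
      · exact Finset.mem_union_right _ (hs2 (Finset.mem_inter.2 ⟨hx, h⟩))
  rw [hcong, Finset.filter_product, Finset.card_product]

/-- Disjointness of parts with different first-factor size. -/
lemma parts_disjoint {X' Y' : Finset ℕ} (hd : Disjoint X' Y')
    {F G F' G' : Finset (Finset ℕ)} {i j i' j' : ℕ}
    (hF : ∀ b ∈ F, b ⊆ X' ∧ b.card = i) (hG : ∀ b ∈ G, b ⊆ Y' ∧ b.card = j)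
    (hF' : ∀ b ∈ F', b ⊆ X' ∧ b.card = i') (hG' : ∀ b ∈ G', b ⊆ Y' ∧ b.card = j')
    (hij : i ≠ i') :
    Disjoint ((F ×ˢ G).image (fun p => p.1 ∪ p.2))
      ((F' ×ˢ G').image (fun p => p.1 ∪ p.2)) := by
  rw [Finset.disjoint_left]
  intro b hb hb'
  have h1 := part_inter_card hd hF hG b hb
  have h2 := part_inter_card hd hF' hG' b hb'
  omega

lemma card_filter_union' {s t : Finset (Finset ℕ)} (h : Disjoint s t)
    (p : Finset ℕ → Prop) [DecidablePred p] :
    ((s ∪ t).filter p).card = (s.filter p).card + (t.filter p).card := by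
  rw [Finset.filter_union,
    Finset.card_union_of_disjoint (Finset.disjoint_filter_filter h)]

lemma combine (X' Y' : Finset ℕ) (hXc : X'.card = 17) (hYc : Y'.card = 18)
    (hdisj : Disjoint X' Y')
    (B7X : Finset (Finset ℕ)) (hB7X : ∀ b ∈ B7X, b ⊆ X' ∧ b.card = 7)
    (hc7X : ∀ T ⊆ X', T.card = 4 → (B7X.filter (fun b => T ⊆ b)).card = 264)
    (B8X : Finset (Finset ℕ)) (hB8X : ∀ b ∈ B8X, b ⊆ X' ∧ b.card = 8)
    (hc8X : ∀ T ⊆ X', T.card = 4 → (B8X.filter (fun b => T ⊆ b)).card = 320)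
    (B7Y : Finset (Finset ℕ)) (hB7Y : ∀ b ∈ B7Y, b ⊆ Y' ∧ b.card = 7)
    (hc7Y : ∀ T ⊆ Y', T.card = 4 → (B7Y.filter (fun b => T ⊆ b)).card = 336)
    (B8Y : Finset (Finset ℕ)) (hB8Y : ∀ b ∈ B8Y, b ⊆ Y' ∧ b.card = 8)
    (hc8Y : ∀ T ⊆ Y', T.card = 4 → (B8Y.filter (fun b => T ⊆ b)).card = 448) :
    ∃ BB : Finset (Finset ℕ),
      (∀ b ∈ BB, b ⊆ X' ∪ Y' ∧ b.card = 8) ∧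
      (∀ T ⊆ X' ∪ Y', T.card = 4 → (BB.filter (fun b => T ⊆ b)).card = 15680) := by
  have hcomp : ∀ (S : Finset ℕ) (k : ℕ), ∀ b ∈ S.powersetCard k, b ⊆ S ∧ b.card = k :=
    fun S k b hb => Finset.mem_powersetCard.1 hb
  have hF0 := hcomp X' 0
  have hF1 := hcomp X' 1
  have hF3 := hcomp X' 3
  have hF5 := hcomp X' 5
  have hG5 := hcomp Y' 5
  have hG3 := hcomp Y' 3
  have hG1 := hcomp Y' 1
  have hG0 := hcomp Y' 0
  set P0 := ((X'.powersetCard 0) ×ˢ B8Y).image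
    (fun p : Finset ℕ × Finset ℕ => p.1 ∪ p.2) with hP0
  set P1 := ((X'.powersetCard 1) ×ˢ B7Y).image
    (fun p : Finset ℕ × Finset ℕ => p.1 ∪ p.2) with hP1
  set P3 := ((X'.powersetCard 3) ×ˢ (Y'.powersetCard 5)).image
    (fun p : Finset ℕ × Finset ℕ => p.1 ∪ p.2) with hP3
  set P5 := ((X'.powersetCard 5) ×ˢ (Y'.powersetCard 3)).image
    (fun p : Finset ℕ × Finset ℕ => p.1 ∪ p.2) with hP5
  set P7 := (B7X ×ˢ (Y'.powersetCard 1)).image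
    (fun p : Finset ℕ × Finset ℕ => p.1 ∪ p.2) with hP7
  set P8 := (B8X ×ˢ (Y'.powersetCard 0)).image
    (fun p : Finset ℕ × Finset ℕ => p.1 ∪ p.2) with hP8
  set BB := P0 ∪ (P1 ∪ (P3 ∪ (P5 ∪ (P7 ∪ P8)))) with hBB
  -- pairwise disjointness
  have d01 : Disjoint P0 P1 := parts_disjoint hdisj hF0 hB8Y hF1 hB7Y (by omega)
  have d03 : Disjoint P0 P3 := parts_disjoint hdisj hF0 hB8Y hF3 hG5 (by omega)
  have d05 : Disjoint P0 P5 := parts_disjoint hdisj hF0 hB8Y hF5 hG3 (by omega)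
  have d07 : Disjoint P0 P7 := parts_disjoint hdisj hF0 hB8Y hB7X hG1 (by omega)
  have d08 : Disjoint P0 P8 := parts_disjoint hdisj hF0 hB8Y hB8X hG0 (by omega)
  have d13 : Disjoint P1 P3 := parts_disjoint hdisj hF1 hB7Y hF3 hG5 (by omega)
  have d15 : Disjoint P1 P5 := parts_disjoint hdisj hF1 hB7Y hF5 hG3 (by omega)
  have d17 : Disjoint P1 P7 := parts_disjoint hdisj hF1 hB7Y hB7X hG1 (by omega)
  have d18 : Disjoint P1 P8 := parts_disjoint hdisj hF1 hB7Y hB8X hG0 (by omega)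
  have d35 : Disjoint P3 P5 := parts_disjoint hdisj hF3 hG5 hF5 hG3 (by omega)
  have d37 : Disjoint P3 P7 := parts_disjoint hdisj hF3 hG5 hB7X hG1 (by omega)
  have d38 : Disjoint P3 P8 := parts_disjoint hdisj hF3 hG5 hB8X hG0 (by omega)
  have d57 : Disjoint P5 P7 := parts_disjoint hdisj hF5 hG3 hB7X hG1 (by omega)
  have d58 : Disjoint P5 P8 := parts_disjoint hdisj hF5 hG3 hB8X hG0 (by omega)
  have d78 : Disjoint P7 P8 := parts_disjoint hdisj hB7X hG1 hB8X hG0 (by omega)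
  have D0 : Disjoint P0 (P1 ∪ (P3 ∪ (P5 ∪ (P7 ∪ P8)))) := by
    simp only [Finset.disjoint_union_right]
    exact ⟨d01, d03, d05, d07, d08⟩
  have D1 : Disjoint P1 (P3 ∪ (P5 ∪ (P7 ∪ P8))) := by
    simp only [Finset.disjoint_union_right]
    exact ⟨d13, d15, d17, d18⟩
  have D3 : Disjoint P3 (P5 ∪ (P7 ∪ P8)) := by
    simp only [Finset.disjoint_union_right]
    exact ⟨d35, d37, d38⟩
  have D5 : Disjoint P5 (P7 ∪ P8) := by
    simp only [Finset.disjoint_union_right]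
    exact ⟨d57, d58⟩
  refine ⟨BB, ?_, ?_⟩
  · -- blocks
    intro b hb
    rw [hBB] at hb
    simp only [Finset.mem_union] at hb
    rw [hP0, hP1, hP3, hP5, hP7, hP8] at hb
    rcases hb with h | h | h | h | h | h
    · obtain ⟨hs, hc⟩ := part_blocks hdisj hF0 hB8Y b h; exact ⟨hs, by omega⟩
    · obtain ⟨hs, hc⟩ := part_blocks hdisj hF1 hB7Y b h; exact ⟨hs, by omega⟩
    · obtain ⟨hs, hc⟩ := part_blocks (i := 3) (j := 5) hdisj hF3 hG5 b h; exact ⟨hs, by omega⟩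
    · obtain ⟨hs, hc⟩ := part_blocks (i := 5) (j := 3) hdisj hF5 hG3 b h; exact ⟨hs, by omega⟩
    · obtain ⟨hs, hc⟩ := part_blocks hdisj hB7X hG1 b h; exact ⟨hs, by omega⟩
    · obtain ⟨hs, hc⟩ := part_blocks hdisj hB8X hG0 b h; exact ⟨hs, by omega⟩
  · -- counting
    intro T hT hT4
    rw [hBB, card_filter_union' D0, card_filter_union' D1, card_filter_union' D3,
      card_filter_union' D5, card_filter_union' d78,
      hP0, hP1, hP3, hP5, hP7, hP8,
      part_count hdisj hF0 hB8Y T hT, part_count hdisj hF1 hB7Y T hT,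
      part_count hdisj hF3 hG5 T hT, part_count hdisj hF5 hG3 T hT,
      part_count hdisj hB7X hG1 T hT, part_count hdisj hB8X hG0 T hT]
    set A := T ∩ X' with hAdef
    set C := T ∩ Y' with hCdef
    have hAX : A ⊆ X' := Finset.inter_subset_right
    have hCY : C ⊆ Y' := Finset.inter_subset_right
    have hACd : Disjoint A C := hdisj.mono hAX hCY
    have hACu : A ∪ C = T := by
      rw [hAdef, hCdef, ← Finset.inter_union_distrib_left]
      exact Finset.inter_eq_left.2 hT
    have hACc : A.card + C.card = 4 := by
      rw [← Finset.card_union_of_disjoint hACd, hACu, hT4]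
    have hcases : A.card = 0 ∨ A.card = 1 ∨ A.card = 2 ∨ A.card = 3 ∨ A.card = 4 := by omega
    rcases hcases with ha | ha | ha | ha | ha
    · -- a = 0, c = 4
      have hc' : C.card = 4 := by omega
      have e1 : ((X'.powersetCard 0).filter (fun b => A ⊆ b)).card = 1 := by
        rw [complete_count X' A 0 hAX (by omega), hXc, ha]; decide
      have e2 : (B8Y.filter (fun b => C ⊆ b)).card = 448 := hc8Y C hCY hc'
      have e3 : ((X'.powersetCard 1).filter (fun b => A ⊆ b)).card = 17 := by
        rw [complete_count X' A 1 hAX (by omega), hXc, ha]; decide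
      have e4 : (B7Y.filter (fun b => C ⊆ b)).card = 336 := hc7Y C hCY hc'
      have e5 : ((X'.powersetCard 3).filter (fun b => A ⊆ b)).card = 680 := by
        rw [complete_count X' A 3 hAX (by omega), hXc, ha]; decide
      have e6 : ((Y'.powersetCard 5).filter (fun b => C ⊆ b)).card = 14 := by
        rw [complete_count Y' C 5 hCY (by omega), hYc, hc']; decide
      have e7 : ((Y'.powersetCard 3).filter (fun b => C ⊆ b)).card = 0 :=
        complete_count_zero Y' C 3 (by omega)
      have e8 : ((Y'.powersetCard 1).filter (fun b => C ⊆ b)).card = 0 :=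
        complete_count_zero Y' C 1 (by omega)
      have e9 : ((Y'.powersetCard 0).filter (fun b => C ⊆ b)).card = 0 :=
        complete_count_zero Y' C 0 (by omega)
      rw [e1, e2, e3, e4, e5, e6, e7, e8, e9]
      simp
    · -- a = 1, c = 3
      have hc' : C.card = 3 := by omega
      have e1 : ((X'.powersetCard 0).filter (fun b => A ⊆ b)).card = 0 :=
        complete_count_zero X' A 0 (by omega)
      have e3 : ((X'.powersetCard 1).filter (fun b => A ⊆ b)).card = 1 := by
        rw [complete_count X' A 1 hAX (by omega), hXc, ha]; decide
      have e4 : (B7Y.filter (fun b => C ⊆ b)).card = 1260 :=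
        stepdown Y' B7Y 7 336 1260 hB7Y hc7Y C hCY hc' (by omega) (by rw [hYc])
      have e5 : ((X'.powersetCard 3).filter (fun b => A ⊆ b)).card = 120 := by
        rw [complete_count X' A 3 hAX (by omega), hXc, ha]; decide
      have e6 : ((Y'.powersetCard 5).filter (fun b => C ⊆ b)).card = 105 := by
        rw [complete_count Y' C 5 hCY (by omega), hYc, hc']; decide
      have e7 : ((X'.powersetCard 5).filter (fun b => A ⊆ b)).card = 1820 := by
        rw [complete_count X' A 5 hAX (by omega), hXc, ha]; decide
      have e8 : ((Y'.powersetCard 3).filter (fun b => C ⊆ b)).card = 1 := by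
        rw [complete_count Y' C 3 hCY (by omega), hYc, hc']; decide
      have e9 : ((Y'.powersetCard 1).filter (fun b => C ⊆ b)).card = 0 :=
        complete_count_zero Y' C 1 (by omega)
      have e10 : ((Y'.powersetCard 0).filter (fun b => C ⊆ b)).card = 0 :=
        complete_count_zero Y' C 0 (by omega)
      rw [e1, e3, e4, e5, e6, e7, e8, e9, e10]
      simp
    · -- a = 2, c = 2
      have hc' : C.card = 2 := by omega
      have e1 : ((X'.powersetCard 0).filter (fun b => A ⊆ b)).card = 0 :=
        complete_count_zero X' A 0 (by omega)
      have e3 : ((X'.powersetCard 1).filter (fun b => A ⊆ b)).card = 0 :=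
        complete_count_zero X' A 1 (by omega)
      have e5 : ((X'.powersetCard 3).filter (fun b => A ⊆ b)).card = 15 := by
        rw [complete_count X' A 3 hAX (by omega), hXc, ha]; decide
      have e6 : ((Y'.powersetCard 5).filter (fun b => C ⊆ b)).card = 560 := by
        rw [complete_count Y' C 5 hCY (by omega), hYc, hc']; decide
      have e7 : ((X'.powersetCard 5).filter (fun b => A ⊆ b)).card = 455 := by
        rw [complete_count X' A 5 hAX (by omega), hXc, ha]; decide
      have e8 : ((Y'.powersetCard 3).filter (fun b => C ⊆ b)).card = 16 := by
        rw [complete_count Y' C 3 hCY (by omega), hYc, hc']; decide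
      have e9 : ((Y'.powersetCard 1).filter (fun b => C ⊆ b)).card = 0 :=
        complete_count_zero Y' C 1 (by omega)
      have e10 : ((Y'.powersetCard 0).filter (fun b => C ⊆ b)).card = 0 :=
        complete_count_zero Y' C 0 (by omega)
      rw [e1, e3, e5, e6, e7, e8, e9, e10]
      simp
    · -- a = 3, c = 1
      have hc' : C.card = 1 := by omega
      have e1 : ((X'.powersetCard 0).filter (fun b => A ⊆ b)).card = 0 :=
        complete_count_zero X' A 0 (by omega)
      have e3 : ((X'.powersetCard 1).filter (fun b => A ⊆ b)).card = 0 :=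
        complete_count_zero X' A 1 (by omega)
      have e5 : ((X'.powersetCard 3).filter (fun b => A ⊆ b)).card = 1 := by
        rw [complete_count X' A 3 hAX (by omega), hXc, ha]; decide
      have e6 : ((Y'.powersetCard 5).filter (fun b => C ⊆ b)).card = 2380 := by
        rw [complete_count Y' C 5 hCY (by omega), hYc, hc']; decide
      have e7 : ((X'.powersetCard 5).filter (fun b => A ⊆ b)).card = 91 := by
        rw [complete_count X' A 5 hAX (by omega), hXc, ha]; decide
      have e8 : ((Y'.powersetCard 3).filter (fun b => C ⊆ b)).card = 136 := by
        rw [complete_count Y' C 3 hCY (by omega), hYc, hc']; decide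
      have e9 : (B7X.filter (fun b => A ⊆ b)).card = 924 :=
        stepdown X' B7X 7 264 924 hB7X hc7X A hAX ha (by omega) (by rw [hXc])
      have e10 : ((Y'.powersetCard 1).filter (fun b => C ⊆ b)).card = 1 := by
        rw [complete_count Y' C 1 hCY (by omega), hYc, hc']; decide
      have e11 : ((Y'.powersetCard 0).filter (fun b => C ⊆ b)).card = 0 :=
        complete_count_zero Y' C 0 (by omega)
      rw [e1, e3, e5, e6, e7, e8, e9, e10, e11]
      simp
    · -- a = 4, c = 0
      have hc' : C.card = 0 := by omega
      have e1 : ((X'.powersetCard 0).filter (fun b => A ⊆ b)).card = 0 :=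
        complete_count_zero X' A 0 (by omega)
      have e3 : ((X'.powersetCard 1).filter (fun b => A ⊆ b)).card = 0 :=
        complete_count_zero X' A 1 (by omega)
      have e5 : ((X'.powersetCard 3).filter (fun b => A ⊆ b)).card = 0 :=
        complete_count_zero X' A 3 (by omega)
      have e7 : ((X'.powersetCard 5).filter (fun b => A ⊆ b)).card = 13 := by
        rw [complete_count X' A 5 hAX (by omega), hXc, ha]; decide
      have e8 : ((Y'.powersetCard 3).filter (fun b => C ⊆ b)).card = 816 := by
        rw [complete_count Y' C 3 hCY (by omega), hYc, hc']; decide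
      have e9 : (B7X.filter (fun b => A ⊆ b)).card = 264 := hc7X A hAX ha
      have e10 : ((Y'.powersetCard 1).filter (fun b => C ⊆ b)).card = 18 := by
        rw [complete_count Y' C 1 hCY (by omega), hYc, hc']; decide
      have e11 : (B8X.filter (fun b => A ⊆ b)).card = 320 := hc8X A hAX ha
      have e12 : ((Y'.powersetCard 0).filter (fun b => C ⊆ b)).card = 1 := by
        rw [complete_count Y' C 0 hCY (by omega), hYc, hc']; decide
      rw [e1, e3, e5, e7, e8, e9, e10, e11, e12]
      simp

theorem designExists_4_35_8
    (h1 : SimpleDesignExists 4 17 5 13)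
    (h2 : SimpleDesignExists 4 17 7 264)
    (h3 : SimpleDesignExists 4 17 8 320)
    (h4 : SimpleDesignExists 4 18 5 14)
    (h5 : SimpleDesignExists 4 18 7 336)
    (h6 : SimpleDesignExists 4 18 8 448)
    : SimpleDesignExists 4 35 8 15680 := by
  set X' : Finset ℕ := Finset.range 17 with hX'def
  set Y' : Finset ℕ := Finset.Ico 17 35 with hY'def
  have hXc : X'.card = 17 := by simp [hX'def]
  have hYc : Y'.card = 18 := by simp [hY'def]
  have hdisj : Disjoint X' Y' := by
    rw [hX'def, hY'def, Finset.range_eq_Ico]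
    exact Finset.Ico_disjoint_Ico_consecutive 0 17 35
  have hunion : X' ∪ Y' = Finset.range 35 := by
    rw [hX'def, hY'def, Finset.range_eq_Ico,
      Finset.Ico_union_Ico_eq_Ico (by omega) (by omega), ← Finset.range_eq_Ico]
  obtain ⟨B7X, hB7X, hc7X⟩ := transfer h2 X' hXc
  obtain ⟨B8X, hB8X, hc8X⟩ := transfer h3 X' hXc
  obtain ⟨B7Y, hB7Y, hc7Y⟩ := transfer h5 Y' hYc
  obtain ⟨B8Y, hB8Y, hc8Y⟩ := transfer h6 Y' hYc
  obtain ⟨BB, hBl, hBc⟩ := combine X' Y' hXc hYc hdisj B7X hB7X hc7X B8X hB8X hc8X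
    B7Y hB7Y hc7Y B8Y hB8Y hc8Y
  refine ⟨Finset.range 35, BB, by simp, ?_, ?_⟩
  · intro b hb
    rw [← hunion]
    exact hBl b hb
  · intro T hT hT4
    rw [← hunion] at hT
    exact hBc T hT hT4
end

section
/- Suppose there exist simple 4-(17,6,18), 4-(17,7,38), 4-(17,8,15) and 4-(17,9,27) designs, and simple 4-(18,5,4), 4-(18,7,84), 4-(18,8,133) and 4-(18,9,42) designs. Then there exists a simple 4-(35, 9, 23247) design (note 23247 = 369 × 63). -/
open Finset

lemma count_supersets (b S : Finset ℕ) (t : ℕ) (hSb : S ⊆ b) (hst : S.card ≤ t) :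
    ((b.powersetCard t).filter (fun T => S ⊆ T)).card
      = (b.card - S.card).choose (t - S.card) := by
  have h : ((b.powersetCard t).filter (fun T => S ⊆ T)).card
      = ((b \ S).powersetCard (t - S.card)).card := by
    apply Finset.card_nbij' (fun T => T \ S) (fun U => U ∪ S)
    · intro T hT
      simp only [mem_coe, mem_filter, mem_powersetCard] at hT
      obtain ⟨⟨hTb, hTc⟩, hST⟩ := hT
      simp only [mem_coe, mem_powersetCard]
      exact ⟨sdiff_subset_sdiff hTb Subset.rfl, by rw [card_sdiff_of_subset hST, hTc]⟩
    · intro U hU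
      simp only [mem_coe, mem_powersetCard] at hU
      obtain ⟨hUb, hUc⟩ := hU
      have hdisj : Disjoint U S := disjoint_of_subset_left hUb sdiff_disjoint
      simp only [mem_coe, mem_filter, mem_powersetCard]
      refine ⟨⟨union_subset (hUb.trans (sdiff_subset)) hSb, ?_⟩, subset_union_right⟩
      rw [card_union_of_disjoint hdisj, hUc]
      omega
    · intro T hT
      simp only [mem_coe, mem_filter] at hT
      exact sdiff_union_of_subset hT.2
    · intro U hU
      simp only [mem_coe, mem_powersetCard] at hU
      exact union_sdiff_cancel_right (disjoint_of_subset_left hU.1 sdiff_disjoint)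
  rw [h, Finset.card_powersetCard, card_sdiff_of_subset hSb]

lemma count_complete (X S : Finset ℕ) (k : ℕ) (hS : S ⊆ X) :
    ((X.powersetCard k).filter (fun b => S ⊆ b)).card
      = if S.card ≤ k then (X.card - S.card).choose (k - S.card) else 0 := by
  split_ifs with h
  · exact count_supersets X S k hS h
  · rw [Finset.card_eq_zero, Finset.filter_eq_empty_iff]
    intro b hb hSb
    simp only [mem_powersetCard] at hb
    have := Finset.card_le_card hSb
    omega

lemma design_count_lower (X : Finset ℕ) (B : Finset (Finset ℕ)) (k lam : ℕ)
    (hB : ∀ b ∈ B, b ⊆ X ∧ b.card = k)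
    (hcnt : ∀ T ⊆ X, T.card = 4 → (B.filter (fun b => T ⊆ b)).card = lam)
    (S : Finset ℕ) (hS : S ⊆ X) (hS4 : S.card ≤ 4) (hSk : S.card ≤ k) :
    (B.filter (fun b => S ⊆ b)).card * (k - S.card).choose (4 - S.card)
      = lam * (X.card - S.card).choose (4 - S.card) := by
  classical
  have key : (∑ b ∈ B, ∑ T ∈ X.powersetCard 4, (if S ⊆ T ∧ T ⊆ b then 1 else 0))
      = (B.filter (fun b => S ⊆ b)).card * (k - S.card).choose (4 - S.card) := by
    have step : ∀ b ∈ B, (∑ T ∈ X.powersetCard 4, (if S ⊆ T ∧ T ⊆ b then (1:ℕ) else 0))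
        = if S ⊆ b then (k - S.card).choose (4 - S.card) else 0 := by
      intro b hb
      obtain ⟨hbX, hbk⟩ := hB b hb
      have hset : (X.powersetCard 4).filter (fun T => S ⊆ T ∧ T ⊆ b)
          = (b.powersetCard 4).filter (fun T => S ⊆ T) := by
        ext T
        simp only [mem_filter, mem_powersetCard]
        constructor
        · rintro ⟨⟨_, hTc⟩, hST, hTb⟩; exact ⟨⟨hTb, hTc⟩, hST⟩
        · rintro ⟨⟨hTb, hTc⟩, hST⟩; exact ⟨⟨hTb.trans hbX, hTc⟩, hST, hTb⟩
      rw [← Finset.card_filter, hset]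
      split_ifs with h
      · rw [count_supersets b S 4 h hS4, hbk]
      · rw [Finset.card_eq_zero, Finset.filter_eq_empty_iff]
        intro T hT hST
        simp only [mem_powersetCard] at hT
        exact h (hST.trans hT.1)
    rw [Finset.sum_congr rfl step, Finset.sum_ite, Finset.sum_const, Finset.sum_const_zero,
      add_zero, smul_eq_mul]
  have key2 : (∑ b ∈ B, ∑ T ∈ X.powersetCard 4, (if S ⊆ T ∧ T ⊆ b then 1 else 0))
      = lam * (X.card - S.card).choose (4 - S.card) := by
    rw [Finset.sum_comm]
    have step : ∀ T ∈ X.powersetCard 4, (∑ b ∈ B, (if S ⊆ T ∧ T ⊆ b then (1:ℕ) else 0))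
        = if S ⊆ T then lam else 0 := by
      intro T hT
      simp only [mem_powersetCard] at hT
      split_ifs with h
      · have : ∀ b, (S ⊆ T ∧ T ⊆ b) = (T ⊆ b) := fun b => by
          simp [h]
        simp only [this]
        rw [← Finset.card_filter, hcnt T hT.1 hT.2]
      · simp [h]
    rw [Finset.sum_congr rfl step, Finset.sum_ite, Finset.sum_const, Finset.sum_const_zero,
      add_zero, smul_eq_mul, count_supersets X S 4 hS hS4]
    ring
  omega

lemma relabel {t v k lam : ℕ} (h : SimpleDesignExists t v k lam)
    (X' : Finset ℕ) (hX' : X'.card = v) :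
    ∃ B : Finset (Finset ℕ), (∀ b ∈ B, b ⊆ X' ∧ b.card = k) ∧
      (∀ T ⊆ X', T.card = t → (B.filter (fun b => T ⊆ b)).card = lam) := by
  classical
  obtain ⟨X, B, hXv, hB, hcnt⟩ := h
  have hcard : X.card = X'.card := by rw [hXv, hX']
  have e := Finset.equivOfCardEq hcard
  set f : ℕ → ℕ := fun n => if h : n ∈ X then (e ⟨n, h⟩ : ℕ) else 0 with hf_def
  set g : ℕ → ℕ := fun n => if h : n ∈ X' then (e.symm ⟨n, h⟩ : ℕ) else 0 with hg_def
  have hf : ∀ n ∈ X, f n ∈ X' := by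
    intro n hn; simp only [hf_def, dif_pos hn]; exact (e ⟨n, hn⟩).2
  have hg : ∀ n ∈ X', g n ∈ X := by
    intro n hn; simp only [hg_def, dif_pos hn]; exact (e.symm ⟨n, hn⟩).2
  have hgf : ∀ n ∈ X, g (f n) = n := by
    intro n hn
    have h1 : f n = (e ⟨n, hn⟩ : ℕ) := dif_pos hn
    have h2 : f n ∈ X' := hf n hn
    simp only [hg_def, dif_pos h2]
    have : (⟨f n, h2⟩ : {x // x ∈ X'}) = e ⟨n, hn⟩ := Subtype.ext h1
    rw [this, Equiv.symm_apply_apply]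
  have hfg : ∀ n ∈ X', f (g n) = n := by
    intro n hn
    have h1 : g n = (e.symm ⟨n, hn⟩ : ℕ) := dif_pos hn
    have h2 : g n ∈ X := hg n hn
    simp only [hf_def, dif_pos h2]
    have : (⟨g n, h2⟩ : {x // x ∈ X}) = e.symm ⟨n, hn⟩ := Subtype.ext h1
    rw [this, Equiv.apply_symm_apply]
  have himgf : ∀ s : Finset ℕ, s ⊆ X → (s.image f).image g = s := by
    intro s hs
    rw [Finset.image_image]
    rw [show (g ∘ f) = fun x => g (f x) from rfl] at *
    calc Finset.image (g ∘ f) s = Finset.image id s := Finset.image_congr (fun x hx => hgf x (hs hx))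
      _ = s := Finset.image_id
  have himfg : ∀ s : Finset ℕ, s ⊆ X' → (s.image g).image f = s := by
    intro s hs
    rw [Finset.image_image]
    calc Finset.image (f ∘ g) s = Finset.image id s := Finset.image_congr (fun x hx => hfg x (hs hx))
      _ = s := Finset.image_id
  have hcardf : ∀ s : Finset ℕ, s ⊆ X → (s.image f).card = s.card := by
    intro s hs
    apply Finset.card_image_of_injOn
    intro a ha b hb hab
    have := congrArg g hab
    rwa [hgf a (hs ha), hgf b (hs hb)] at this
  have hcardg : ∀ s : Finset ℕ, s ⊆ X' → (s.image g).card = s.card := by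
    intro s hs
    apply Finset.card_image_of_injOn
    intro a ha b hb hab
    have := congrArg f hab
    rwa [hfg a (hs ha), hfg b (hs hb)] at this
  refine ⟨B.image (fun b => b.image f), ?_, ?_⟩
  · intro b' hb'
    simp only [Finset.mem_image] at hb'
    obtain ⟨b, hb, rfl⟩ := hb'
    obtain ⟨hbX, hbk⟩ := hB b hb
    constructor
    · intro x hx
      simp only [Finset.mem_image] at hx
      obtain ⟨a, ha, rfl⟩ := hx
      exact hf a (hbX ha)
    · rw [hcardf b hbX, hbk]
  · intro T hT hTc
    set T' := T.image g with hT'_def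
    have hT'X : T' ⊆ X := by
      intro x hx
      simp only [hT'_def, Finset.mem_image] at hx
      obtain ⟨a, ha, rfl⟩ := hx
      exact hg a (hT ha)
    have hT'c : T'.card = t := by rw [hT'_def, hcardg T hT, hTc]
    rw [Finset.filter_image]
    have hinj : Set.InjOn (fun b => Finset.image f b)
        ↑(B.filter (fun b => T ⊆ Finset.image f b)) := by
      intro b1 hb1 b2 hb2 hab
      simp only [Finset.coe_filter, Set.mem_setOf_eq] at hb1 hb2
      have e1 := himgf b1 (hB b1 hb1.1).1
      have e2 := himgf b2 (hB b2 hb2.1).1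
      rw [← e1, ← e2]
      simp only at hab
      rw [hab]
    rw [Finset.card_image_of_injOn hinj]
    have : B.filter (fun b => T ⊆ Finset.image f b) = B.filter (fun b => T' ⊆ b) := by
      apply Finset.filter_congr
      intro b hb
      obtain ⟨hbX, _⟩ := hB b hb
      constructor
      · intro h
        have := Finset.image_subset_image (f := g) h
        rwa [himgf b hbX, ← hT'_def] at this
      · intro h
        have := Finset.image_subset_image (f := f) h
        rwa [himfg T hT] at this
    rw [this, hcnt T' hT'X hT'c]

def tableX : List (List ℕ) :=
  [[1,0,0,0,0],[17,1,0,0,0],[136,16,1,0,0],[0,0,0,0,0],[2380,560,105,14,1],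
   [0,0,0,0,0],[2856,1008,315,84,18],[2584,1064,399,133,38],[510,240,105,42,15],
   [510,270,135,63,27]]

def tableY : List (List ℕ) :=
  [[1020,510,240,105,42],[5814,2584,1064,399,133],[7344,2856,1008,315,84],[0,0,0,0,0],
   [2448,680,160,30,4],[0,0,0,0,0],[816,136,16,1,0],[153,17,1,0,0],[18,1,0,0,0],
   [1,0,0,0,0]]

def fX (i j : ℕ) : ℕ := (tableX.getD i []).getD j 0
def fY (i m : ℕ) : ℕ := (tableY.getD i []).getD m 0

theorem designExists_4_35_9_369
    (h1 : SimpleDesignExists 4 17 6 18)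
    (h2 : SimpleDesignExists 4 17 7 38)
    (h3 : SimpleDesignExists 4 17 8 15)
    (h4 : SimpleDesignExists 4 17 9 27)
    (h5 : SimpleDesignExists 4 18 5 4)
    (h6 : SimpleDesignExists 4 18 7 84)
    (h7 : SimpleDesignExists 4 18 8 133)
    (h8 : SimpleDesignExists 4 18 9 42)
    : SimpleDesignExists 4 35 9 23247 := by
  classical
  set X : Finset ℕ := Finset.range 17 with hX_def
  set Y : Finset ℕ := Finset.Ico 17 35 with hY_def
  have hXc : X.card = 17 := by simp [hX_def]
  have hYc : Y.card = 18 := by simp [hY_def]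
  have hXY : Disjoint X Y := by
    rw [Finset.disjoint_left]
    intro a ha hb
    rw [hX_def, Finset.mem_range] at ha
    rw [hY_def, Finset.mem_Ico] at hb
    omega
  have hun : X ∪ Y = Finset.range 35 := by
    rw [hX_def, hY_def, Finset.range_eq_Ico]
    exact Finset.Ico_union_Ico_eq_Ico (by norm_num) (by norm_num)
  obtain ⟨D6, hD6b, hD6c⟩ := relabel h1 X hXc
  obtain ⟨D7, hD7b, hD7c⟩ := relabel h2 X hXc
  obtain ⟨D8, hD8b, hD8c⟩ := relabel h3 X hXc
  obtain ⟨D9, hD9b, hD9c⟩ := relabel h4 X hXc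
  obtain ⟨E5, hE5b, hE5c⟩ := relabel h5 Y hYc
  obtain ⟨E7, hE7b, hE7c⟩ := relabel h6 Y hYc
  obtain ⟨E8, hE8b, hE8c⟩ := relabel h7 Y hYc
  obtain ⟨E9, hE9b, hE9c⟩ := relabel h8 Y hYc
  set PX : ℕ → Finset (Finset ℕ) := fun i =>
    if i = 6 then D6 else if i = 7 then D7 else if i = 8 then D8 else if i = 9 then D9
    else if i = 3 ∨ i = 5 then ∅ else X.powersetCard i with hPX_def
  set PY : ℕ → Finset (Finset ℕ) := fun i =>
    if i = 0 then E9 else if i = 1 then E8 else if i = 2 then E7 else if i = 4 then E5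
    else if i = 3 ∨ i = 5 then ∅ else Y.powersetCard (9 - i) with hPY_def
  -- blocks of the pieces
  have hPXb : ∀ i < 10, ∀ b ∈ PX i, b ⊆ X ∧ b.card = i := by
    intro i hi b hb
    interval_cases i
    · exact Finset.mem_powersetCard.1 (by rwa [show PX 0 = X.powersetCard 0 by norm_num [hPX_def]] at hb)
    · exact Finset.mem_powersetCard.1 (by rwa [show PX 1 = X.powersetCard 1 by norm_num [hPX_def]] at hb)
    · exact Finset.mem_powersetCard.1 (by rwa [show PX 2 = X.powersetCard 2 by norm_num [hPX_def]] at hb)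
    · rw [show PX 3 = ∅ by norm_num [hPX_def]] at hb; simp at hb
    · exact Finset.mem_powersetCard.1 (by rwa [show PX 4 = X.powersetCard 4 by norm_num [hPX_def]] at hb)
    · rw [show PX 5 = ∅ by norm_num [hPX_def]] at hb; simp at hb
    · exact hD6b b (by rwa [show PX 6 = D6 by norm_num [hPX_def]] at hb)
    · exact hD7b b (by rwa [show PX 7 = D7 by norm_num [hPX_def]] at hb)
    · exact hD8b b (by rwa [show PX 8 = D8 by norm_num [hPX_def]] at hb)
    · exact hD9b b (by rwa [show PX 9 = D9 by norm_num [hPX_def]] at hb)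
  have hPYb : ∀ i < 10, ∀ b ∈ PY i, b ⊆ Y ∧ b.card = 9 - i := by
    intro i hi b hb
    interval_cases i
    · exact hE9b b (by rwa [show PY 0 = E9 by norm_num [hPY_def]] at hb)
    · exact hE8b b (by rwa [show PY 1 = E8 by norm_num [hPY_def]] at hb)
    · exact hE7b b (by rwa [show PY 2 = E7 by norm_num [hPY_def]] at hb)
    · rw [show PY 3 = ∅ by norm_num [hPY_def]] at hb; simp at hb
    · exact hE5b b (by rwa [show PY 4 = E5 by norm_num [hPY_def]] at hb)
    · rw [show PY 5 = ∅ by norm_num [hPY_def]] at hb; simp at hb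
    · exact Finset.mem_powersetCard.1 (by rwa [show PY 6 = Y.powersetCard 3 by norm_num [hPY_def]] at hb)
    · exact Finset.mem_powersetCard.1 (by rwa [show PY 7 = Y.powersetCard 2 by norm_num [hPY_def]] at hb)
    · exact Finset.mem_powersetCard.1 (by rwa [show PY 8 = Y.powersetCard 1 by norm_num [hPY_def]] at hb)
    · exact Finset.mem_powersetCard.1 (by rwa [show PY 9 = Y.powersetCard 0 by norm_num [hPY_def]] at hb)
  -- counting for the pieces
  have hj5 : ∀ S : Finset ℕ, S.card ≤ 4 →
      S.card = 0 ∨ S.card = 1 ∨ S.card = 2 ∨ S.card = 3 ∨ S.card = 4 := by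
    intro S h; omega
  have hPXc : ∀ i < 10, ∀ S ⊆ X, S.card ≤ 4 →
      ((PX i).filter (fun b => S ⊆ b)).card = fX i S.card := by
    intro i hi S hS hS4
    have hcomp := count_complete X S
    interval_cases i
    · rw [show PX 0 = X.powersetCard 0 by norm_num [hPX_def], hcomp 0 hS, hXc]
      rcases hj5 S hS4 with h|h|h|h|h <;> rw [h] <;> decide
    · rw [show PX 1 = X.powersetCard 1 by norm_num [hPX_def], hcomp 1 hS, hXc]
      rcases hj5 S hS4 with h|h|h|h|h <;> rw [h] <;> decide
    · rw [show PX 2 = X.powersetCard 2 by norm_num [hPX_def], hcomp 2 hS, hXc]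
      rcases hj5 S hS4 with h|h|h|h|h <;> rw [h] <;> decide
    · rw [show PX 3 = ∅ by norm_num [hPX_def]]
      rcases hj5 S hS4 with h|h|h|h|h <;> rw [h] <;> simp [fX, tableX]
    · rw [show PX 4 = X.powersetCard 4 by norm_num [hPX_def], hcomp 4 hS, hXc]
      rcases hj5 S hS4 with h|h|h|h|h <;> rw [h] <;> decide
    · rw [show PX 5 = ∅ by norm_num [hPX_def]]
      rcases hj5 S hS4 with h|h|h|h|h <;> rw [h] <;> simp [fX, tableX]
    · rw [show PX 6 = D6 by norm_num [hPX_def]]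
      have key := design_count_lower X D6 6 18 hD6b hD6c S hS hS4 (by omega)
      rw [hXc] at key
      rcases hj5 S hS4 with h|h|h|h|h <;> rw [h] at key ⊢ <;> norm_num [Nat.choose, fX, fY, tableX, tableY, List.getD] at key ⊢ <;> omega
    · rw [show PX 7 = D7 by norm_num [hPX_def]]
      have key := design_count_lower X D7 7 38 hD7b hD7c S hS hS4 (by omega)
      rw [hXc] at key
      rcases hj5 S hS4 with h|h|h|h|h <;> rw [h] at key ⊢ <;> norm_num [Nat.choose, fX, fY, tableX, tableY, List.getD] at key ⊢ <;> omega
    · rw [show PX 8 = D8 by norm_num [hPX_def]]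
      have key := design_count_lower X D8 8 15 hD8b hD8c S hS hS4 (by omega)
      rw [hXc] at key
      rcases hj5 S hS4 with h|h|h|h|h <;> rw [h] at key ⊢ <;> norm_num [Nat.choose, fX, fY, tableX, tableY, List.getD] at key ⊢ <;> omega
    · rw [show PX 9 = D9 by norm_num [hPX_def]]
      have key := design_count_lower X D9 9 27 hD9b hD9c S hS hS4 (by omega)
      rw [hXc] at key
      rcases hj5 S hS4 with h|h|h|h|h <;> rw [h] at key ⊢ <;> norm_num [Nat.choose, fX, fY, tableX, tableY, List.getD] at key ⊢ <;> omega
  have hPYc : ∀ i < 10, ∀ S ⊆ Y, S.card ≤ 4 →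
      ((PY i).filter (fun b => S ⊆ b)).card = fY i S.card := by
    intro i hi S hS hS4
    have hcomp := count_complete Y S
    interval_cases i
    · rw [show PY 0 = E9 by norm_num [hPY_def]]
      have key := design_count_lower Y E9 9 42 hE9b hE9c S hS hS4 (by omega)
      rw [hYc] at key
      rcases hj5 S hS4 with h|h|h|h|h <;> rw [h] at key ⊢ <;> norm_num [Nat.choose, fX, fY, tableX, tableY, List.getD] at key ⊢ <;> omega
    · rw [show PY 1 = E8 by norm_num [hPY_def]]
      have key := design_count_lower Y E8 8 133 hE8b hE8c S hS hS4 (by omega)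
      rw [hYc] at key
      rcases hj5 S hS4 with h|h|h|h|h <;> rw [h] at key ⊢ <;> norm_num [Nat.choose, fX, fY, tableX, tableY, List.getD] at key ⊢ <;> omega
    · rw [show PY 2 = E7 by norm_num [hPY_def]]
      have key := design_count_lower Y E7 7 84 hE7b hE7c S hS hS4 (by omega)
      rw [hYc] at key
      rcases hj5 S hS4 with h|h|h|h|h <;> rw [h] at key ⊢ <;> norm_num [Nat.choose, fX, fY, tableX, tableY, List.getD] at key ⊢ <;> omega
    · rw [show PY 3 = ∅ by norm_num [hPY_def]]
      rcases hj5 S hS4 with h|h|h|h|h <;> rw [h] <;> simp [fY, tableY]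
    · rw [show PY 4 = E5 by norm_num [hPY_def]]
      have key := design_count_lower Y E5 5 4 hE5b hE5c S hS hS4 (by omega)
      rw [hYc] at key
      rcases hj5 S hS4 with h|h|h|h|h <;> rw [h] at key ⊢ <;> norm_num [Nat.choose, fX, fY, tableX, tableY, List.getD] at key ⊢ <;> omega
    · rw [show PY 5 = ∅ by norm_num [hPY_def]]
      rcases hj5 S hS4 with h|h|h|h|h <;> rw [h] <;> simp [fY, tableY]
    · rw [show PY 6 = Y.powersetCard 3 by norm_num [hPY_def], hcomp 3 hS, hYc]
      rcases hj5 S hS4 with h|h|h|h|h <;> rw [h] <;> decide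
    · rw [show PY 7 = Y.powersetCard 2 by norm_num [hPY_def], hcomp 2 hS, hYc]
      rcases hj5 S hS4 with h|h|h|h|h <;> rw [h] <;> decide
    · rw [show PY 8 = Y.powersetCard 1 by norm_num [hPY_def], hcomp 1 hS, hYc]
      rcases hj5 S hS4 with h|h|h|h|h <;> rw [h] <;> decide
    · rw [show PY 9 = Y.powersetCard 0 by norm_num [hPY_def], hcomp 0 hS, hYc]
      rcases hj5 S hS4 with h|h|h|h|h <;> rw [h] <;> decide
  -- the big design
  set img : ℕ → Finset (Finset ℕ) :=
    fun i => ((PX i) ×ˢ (PY i)).image (fun p => p.1 ∪ p.2) with himg_def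
  have himg_mem : ∀ i < 10, ∀ b ∈ img i,
      b ∩ X ∈ PX i ∧ b ∩ Y ∈ PY i ∧ b ⊆ X ∪ Y ∧ b.card = 9 ∧ (b ∩ X).card = i := by
    intro i hi b hb
    rw [himg_def, Finset.mem_image] at hb
    obtain ⟨p, hp, rfl⟩ := hb
    rw [Finset.mem_product] at hp
    obtain ⟨hA, hC⟩ := hp
    obtain ⟨hAX, hAc⟩ := hPXb i hi p.1 hA
    obtain ⟨hCY, hCc⟩ := hPYb i hi p.2 hC
    have hAXeq : p.1 ∩ X = p.1 := Finset.inter_eq_left.2 hAX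
    have hCXeq : p.2 ∩ X = ∅ := by
      rw [← Finset.disjoint_iff_inter_eq_empty]
      exact hXY.symm.mono_left hCY
    have hAYeq : p.1 ∩ Y = ∅ := by
      rw [← Finset.disjoint_iff_inter_eq_empty]
      exact hXY.mono_left hAX
    have hCYeq : p.2 ∩ Y = p.2 := Finset.inter_eq_left.2 hCY
    have hiX : (p.1 ∪ p.2) ∩ X = p.1 := by
      rw [Finset.union_inter_distrib_right, hAXeq, hCXeq, Finset.union_empty]
    have hiY : (p.1 ∪ p.2) ∩ Y = p.2 := by
      rw [Finset.union_inter_distrib_right, hAYeq, hCYeq, Finset.empty_union]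
    refine ⟨by rw [hiX]; exact hA, by rw [hiY]; exact hC,
      Finset.union_subset_union hAX hCY, ?_, by rw [hiX, hAc]⟩
    rw [Finset.card_union_of_disjoint (hXY.mono hAX hCY), hAc, hCc]
    omega
  refine ⟨Finset.range 35, (Finset.range 10).biUnion img, by simp, ?_, ?_⟩
  · intro b hb
    rw [Finset.mem_biUnion] at hb
    obtain ⟨i, hi, hb⟩ := hb
    rw [Finset.mem_range] at hi
    obtain ⟨_, _, hsub, hcard, _⟩ := himg_mem i hi b hb
    exact ⟨hun ▸ hsub, hcard⟩
  · intro T hT hT4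
    have hTXY : T ⊆ X ∪ Y := hun ▸ hT
    set Tx : Finset ℕ := T ∩ X with hTx_def
    set Ty : Finset ℕ := T ∩ Y with hTy_def
    have hTxX : Tx ⊆ X := Finset.inter_subset_right
    have hTyY : Ty ⊆ Y := Finset.inter_subset_right
    have hTsplit : Tx ∪ Ty = T := by
      rw [hTx_def, hTy_def, ← Finset.inter_union_distrib_left]
      exact Finset.inter_eq_left.2 hTXY
    have hdisjT : Disjoint Tx Ty := hXY.mono hTxX hTyY
    have hcards : Tx.card + Ty.card = 4 := by
      rw [← Finset.card_union_of_disjoint hdisjT, hTsplit, hT4]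
    rw [Finset.filter_biUnion]
    rw [Finset.card_biUnion (by
      intro i hi j hj hij
      apply Finset.disjoint_filter_filter
      rw [Finset.disjoint_left]
      intro b hbi hbj
      rw [Finset.mem_coe, Finset.mem_range] at hi hj
      have := (himg_mem i hi b hbi).2.2.2.2
      have := (himg_mem j hj b hbj).2.2.2.2
      omega)]
    have hterm : ∀ i ∈ Finset.range 10,
        ((img i).filter (fun b => T ⊆ b)).card = fX i Tx.card * fY i Ty.card := by
      intro i hi
      rw [Finset.mem_range] at hi
      rw [himg_def]
      rw [Finset.filter_image]
      have hinj : Set.InjOn (fun p : Finset ℕ × Finset ℕ => p.1 ∪ p.2)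
          ↑(((PX i) ×ˢ (PY i)).filter (fun p => T ⊆ p.1 ∪ p.2)) := by
        intro p hp q hq hpq
        simp only [Finset.coe_filter, Set.mem_setOf_eq, Finset.mem_product] at hp hq
        have hpX := (hPXb i hi p.1 hp.1.1).1
        have hpY := (hPYb i hi p.2 hp.1.2).1
        have hqX := (hPXb i hi q.1 hq.1.1).1
        have hqY := (hPYb i hi q.2 hq.1.2).1
        simp only at hpq
        have h1 : p.1 = q.1 := by
          have e1 : (p.1 ∪ p.2) ∩ X = p.1 := by
            rw [Finset.union_inter_distrib_right, Finset.inter_eq_left.2 hpX,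
              Finset.disjoint_iff_inter_eq_empty.1 (hXY.symm.mono_left hpY), Finset.union_empty]
          have e2 : (q.1 ∪ q.2) ∩ X = q.1 := by
            rw [Finset.union_inter_distrib_right, Finset.inter_eq_left.2 hqX,
              Finset.disjoint_iff_inter_eq_empty.1 (hXY.symm.mono_left hqY), Finset.union_empty]
          rw [← e1, ← e2, hpq]
        have h2 : p.2 = q.2 := by
          have e1 : (p.1 ∪ p.2) ∩ Y = p.2 := by
            rw [Finset.union_inter_distrib_right, Finset.inter_eq_left.2 hpY,
              Finset.disjoint_iff_inter_eq_empty.1 (hXY.mono_left hpX), Finset.empty_union]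
          have e2 : (q.1 ∪ q.2) ∩ Y = q.2 := by
            rw [Finset.union_inter_distrib_right, Finset.inter_eq_left.2 hqY,
              Finset.disjoint_iff_inter_eq_empty.1 (hXY.mono_left hqX), Finset.empty_union]
          rw [← e1, ← e2, hpq]
        exact Prod.ext h1 h2
      rw [Finset.card_image_of_injOn hinj]
      have hfeq : ((PX i) ×ˢ (PY i)).filter (fun p => T ⊆ p.1 ∪ p.2)
          = ((PX i) ×ˢ (PY i)).filter (fun p => Tx ⊆ p.1 ∧ Ty ⊆ p.2) := by
        apply Finset.filter_congr
        intro p hp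
        rw [Finset.mem_product] at hp
        have hpX := (hPXb i hi p.1 hp.1).1
        have hpY := (hPYb i hi p.2 hp.2).1
        constructor
        · intro h
          constructor
          · intro x hx
            have hxX : x ∈ X := hTxX hx
            have hxT : x ∈ T := by
              rw [← hTsplit]; exact Finset.mem_union_left _ hx
            rcases Finset.mem_union.1 (h hxT) with h' | h'
            · exact h'
            · exact absurd hxX (Finset.disjoint_left.1 hXY.symm (hpY h'))
          · intro x hx
            have hxY : x ∈ Y := hTyY hx
            have hxT : x ∈ T := by
              rw [← hTsplit]; exact Finset.mem_union_right _ hx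
            rcases Finset.mem_union.1 (h hxT) with h' | h'
            · exact absurd hxY (Finset.disjoint_left.1 hXY (hpX h'))
            · exact h'
        · intro h
          rw [← hTsplit]
          exact Finset.union_subset_union h.1 h.2
      rw [hfeq, Finset.filter_product, Finset.card_product,
        hPXc i hi Tx hTxX (by omega), hPYc i hi Ty hTyY (by omega)]
    rw [Finset.sum_congr rfl hterm]
    have h4 : Tx.card ≤ 4 := by omega
    rcases hj5 Tx h4 with h|h|h|h|h <;>
      · have hy : Ty.card = 4 - Tx.card := by omega
        rw [hy, h]
        decide
end

section
/- Suppose there exist simple 4-(17,5,4), 4-(17,7,84), 4-(17,8,50) and 4-(17,9,90) designs, and simple 4-(18,6,28), 4-(18,8,294) and 4-(18,9,140) designs. Then there exists a simple 4-(35, 9, 26082) design (note 26082 = 414 × 63). -/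
open Finset

lemma count_subsets (X T : Finset ℕ) (s j : ℕ) (hT : T ⊆ X) (hTc : T.card = j)
    (hjs : j ≤ s) :
    ((X.powersetCard s).filter (fun A => T ⊆ A)).card = (X.card - j).choose (s - j) := by
  have hbij : ((X.powersetCard s).filter (fun A => T ⊆ A)).card
      = ((X \ T).powersetCard (s - j)).card := by
    apply Finset.card_nbij' (fun A => A \ T) (fun B => B ∪ T)
    · intro A hA
      simp only [Finset.mem_coe] at hA ⊢
      simp only [mem_filter, mem_powersetCard] at hA
      obtain ⟨⟨hAX, hAc⟩, hTA⟩ := hA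
      rw [mem_powersetCard]
      constructor
      · exact sdiff_subset_sdiff hAX (Finset.Subset.refl T)
      · rw [card_sdiff_of_subset hTA, hAc, hTc]
    · intro B hB
      simp only [Finset.mem_coe] at hB ⊢
      rw [mem_powersetCard] at hB
      obtain ⟨hBX, hBc⟩ := hB
      have hdisj : Disjoint B T :=
        Finset.disjoint_left.mpr (fun u hu hu2 => (Finset.mem_sdiff.mp (hBX hu)).2 hu2)
      simp only [mem_filter, mem_powersetCard]
      refine ⟨⟨?_, ?_⟩, Finset.subset_union_right⟩
      · exact Finset.union_subset (hBX.trans (Finset.sdiff_subset)) hT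
      · rw [Finset.card_union_of_disjoint hdisj, hBc, hTc]
        omega
    · intro A hA
      simp only [Finset.mem_coe] at hA
      simp only [mem_filter, mem_powersetCard] at hA
      exact Finset.sdiff_union_of_subset hA.2
    · intro B hB
      simp only [Finset.mem_coe] at hB
      beta_reduce
      rw [mem_powersetCard] at hB
      have hdisj : Disjoint B T :=
        Finset.disjoint_left.mpr (fun u hu hu2 => (Finset.mem_sdiff.mp (hB.1 hu)).2 hu2)
      rw [Finset.union_sdiff_distrib, Finset.sdiff_self, Finset.union_empty,
        Finset.sdiff_eq_self_of_disjoint hdisj]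
  rw [hbij, Finset.card_powersetCard, Finset.card_sdiff_of_subset hT, hTc]

lemma count_zero (F : Finset (Finset ℕ)) (T : Finset ℕ) (s : ℕ)
    (hF : ∀ A ∈ F, A.card = s) (h : s < T.card) :
    (F.filter (fun A => T ⊆ A)).card = 0 := by
  rw [Finset.card_eq_zero, Finset.filter_eq_empty_iff]
  intro A hA hTA
  have := Finset.card_le_card hTA
  have := hF A hA
  omega

lemma design_lower (X : Finset ℕ) (B : Finset (Finset ℕ)) (k lam : ℕ)
    (hB : ∀ b ∈ B, b ⊆ X ∧ b.card = k)
    (hdes : ∀ T ⊆ X, T.card = 4 → (B.filter (fun b => T ⊆ b)).card = lam)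
    (hk4 : 4 ≤ k) (T : Finset ℕ) (hT : T ⊆ X) (j : ℕ) (hTc : T.card = j) (hj : j ≤ 4) :
    (B.filter (fun b => T ⊆ b)).card * (k - j).choose (4 - j) =
      (X.card - j).choose (4 - j) * lam := by
  set S4 := (X.powersetCard 4).filter (fun S => T ⊆ S) with hS4
  have key : ∑ S ∈ S4, (B.filter (fun b => S ⊆ b)).card
      = ∑ b ∈ B, ((S4.filter (fun S => S ⊆ b)).card) := by
    simp only [Finset.card_filter]
    exact Finset.sum_comm
  -- LHS of key
  have hL : ∑ S ∈ S4, (B.filter (fun b => S ⊆ b)).card = S4.card * lam := by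
    rw [Finset.sum_congr rfl (fun S hS => ?_), Finset.sum_const, smul_eq_mul]
    rw [hS4, mem_filter, mem_powersetCard] at hS
    exact hdes S hS.1.1 hS.1.2
  have hS4card : S4.card = (X.card - j).choose (4 - j) := by
    rw [hS4]
    exact count_subsets X T 4 j hT hTc hj
  -- RHS of key
  have hR : ∀ b ∈ B, (S4.filter (fun S => S ⊆ b)).card
      = if T ⊆ b then (k - j).choose (4 - j) else 0 := by
    intro b hb
    obtain ⟨hbX, hbc⟩ := hB b hb
    by_cases hTb : T ⊆ b
    · rw [if_pos hTb]
      have : S4.filter (fun S => S ⊆ b) = (b.powersetCard 4).filter (fun S => T ⊆ S) := by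
        ext S
        simp only [hS4, mem_filter, mem_powersetCard]
        constructor
        · rintro ⟨⟨⟨hSX, hSc⟩, hTS⟩, hSb⟩
          exact ⟨⟨hSb, hSc⟩, hTS⟩
        · rintro ⟨⟨hSb, hSc⟩, hTS⟩
          exact ⟨⟨⟨hSb.trans hbX, hSc⟩, hTS⟩, hSb⟩
      rw [this, count_subsets b T 4 j hTb hTc hj, hbc]
    · rw [if_neg hTb]
      rw [Finset.card_eq_zero, Finset.filter_eq_empty_iff]
      intro S hS hSb
      rw [hS4, mem_filter] at hS
      exact hTb (hS.2.trans hSb)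
  have hR2 : ∑ b ∈ B, ((S4.filter (fun S => S ⊆ b)).card)
      = (B.filter (fun b => T ⊆ b)).card * (k - j).choose (4 - j) := by
    rw [Finset.sum_congr rfl hR, ← Finset.sum_filter, Finset.sum_const, smul_eq_mul]
  rw [← hR2, ← key, hL, hS4card]

def prodFam (F G : Finset (Finset ℕ)) : Finset (Finset ℕ) :=
  (F ×ˢ G).image (fun p => p.1 ∪ p.2)

lemma prodFam_block (X Y : Finset ℕ) (hd : Disjoint X Y) (F G : Finset (Finset ℕ))
    (s1 s2 : ℕ) (hF : ∀ A ∈ F, A ⊆ X ∧ A.card = s1) (hG : ∀ C ∈ G, C ⊆ Y ∧ C.card = s2) :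
    ∀ b ∈ prodFam F G, b ⊆ X ∪ Y ∧ b.card = s1 + s2 ∧ (b ∩ X).card = s1 := by
  intro b hb
  obtain ⟨p, hp, rfl⟩ := Finset.mem_image.mp hb
  obtain ⟨hpF, hpG⟩ := Finset.mem_product.mp hp
  obtain ⟨hAX, hAc⟩ := hF p.1 hpF
  obtain ⟨hCY, hCc⟩ := hG p.2 hpG
  have hACd : Disjoint p.1 p.2 :=
    Finset.disjoint_left.mpr (fun u hu hu2 =>
      Finset.disjoint_left.mp hd (hAX hu) (hCY hu2))
  refine ⟨Finset.union_subset_union hAX hCY, ?_, ?_⟩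
  · rw [Finset.card_union_of_disjoint hACd, hAc, hCc]
  · have : (p.1 ∪ p.2) ∩ X = p.1 := by
      rw [Finset.union_inter_distrib_right]
      rw [Finset.inter_eq_left.mpr hAX]
      rw [Finset.inter_comm, Finset.disjoint_iff_inter_eq_empty.mp
        (Finset.disjoint_left.mpr (fun u hu hu2 => Finset.disjoint_left.mp hd hu (hCY hu2))),
        Finset.union_empty]
    rw [this, hAc]

lemma prodFam_count (X Y : Finset ℕ) (hd : Disjoint X Y) (F G : Finset (Finset ℕ))
    (hF : ∀ A ∈ F, A ⊆ X) (hG : ∀ C ∈ G, C ⊆ Y)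
    (T : Finset ℕ) (hT : T ⊆ X ∪ Y) :
    ((prodFam F G).filter (fun b => T ⊆ b)).card
      = (F.filter (fun A => T ∩ X ⊆ A)).card * (G.filter (fun C => T ∩ Y ⊆ C)).card := by
  have hsub : ∀ p ∈ F ×ˢ G, (T ⊆ p.1 ∪ p.2 ↔ (T ∩ X ⊆ p.1 ∧ T ∩ Y ⊆ p.2)) := by
    intro p hp
    obtain ⟨hpF, hpG⟩ := Finset.mem_product.mp hp
    have hAX := hF p.1 hpF
    have hCY := hG p.2 hpG
    constructor
    · intro h
      constructor
      · intro u hu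
        rw [Finset.mem_inter] at hu
        rcases Finset.mem_union.mp (h hu.1) with h1 | h1
        · exact h1
        · exact absurd (Finset.disjoint_left.mp hd hu.2 (hCY h1)) (fun h => h)
      · intro u hu
        rw [Finset.mem_inter] at hu
        rcases Finset.mem_union.mp (h hu.1) with h1 | h1
        · exact absurd (Finset.disjoint_left.mp hd (hAX h1) hu.2) (fun h => h)
        · exact h1
    · rintro ⟨h1, h2⟩ u hu
      rcases Finset.mem_union.mp (hT hu) with hX | hY
      · exact Finset.mem_union_left _ (h1 (Finset.mem_inter.mpr ⟨hu, hX⟩))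
      · exact Finset.mem_union_right _ (h2 (Finset.mem_inter.mpr ⟨hu, hY⟩))
  have hinj : Set.InjOn (fun p : Finset ℕ × Finset ℕ => p.1 ∪ p.2) ↑(F ×ˢ G) := by
    intro p hp q hq hpq
    simp only at hpq
    simp only [Finset.mem_coe, Finset.mem_product] at hp hq
    have hp1 : p.1 = (p.1 ∪ p.2) ∩ X := by
      rw [Finset.union_inter_distrib_right, Finset.inter_eq_left.mpr (hF p.1 hp.1),
        Finset.inter_comm p.2 X, Finset.disjoint_iff_inter_eq_empty.mp
          (Finset.disjoint_left.mpr (fun u hu hu2 => Finset.disjoint_left.mp hd hu (hG p.2 hp.2 hu2))),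
        Finset.union_empty]
    have hq1 : q.1 = (q.1 ∪ q.2) ∩ X := by
      rw [Finset.union_inter_distrib_right, Finset.inter_eq_left.mpr (hF q.1 hq.1),
        Finset.inter_comm q.2 X, Finset.disjoint_iff_inter_eq_empty.mp
          (Finset.disjoint_left.mpr (fun u hu hu2 => Finset.disjoint_left.mp hd hu (hG q.2 hq.2 hu2))),
        Finset.union_empty]
    have he1 : p.1 = q.1 := by rw [hp1, hq1, hpq]
    have he2 : p.2 = q.2 := by
      have := hpq
      have h2 : p.1 ∪ p.2 = q.1 ∪ q.2 := this
      ext u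
      constructor
      · intro hu
        have hY := hG p.2 hp.2 hu
        rcases Finset.mem_union.mp (h2 ▸ Finset.mem_union_right p.1 hu) with h1 | h1
        · exact absurd (Finset.disjoint_left.mp hd (hF q.1 hq.1 h1) hY) (fun h => h)
        · exact h1
      · intro hu
        have hY := hG q.2 hq.2 hu
        rcases Finset.mem_union.mp (h2 ▸ Finset.mem_union_right q.1 hu) with h1 | h1
        · exact absurd (Finset.disjoint_left.mp hd (hF p.1 hp.1 h1) hY) (fun h => h)
        · exact h1
    exact Prod.ext he1 he2
  rw [prodFam, Finset.filter_image]
  rw [Finset.card_image_of_injOn (hinj.mono (Finset.coe_subset.mpr (Finset.filter_subset _ _)))]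
  rw [Finset.filter_congr hsub, Finset.filter_product, Finset.card_product]

lemma transport (t v k lam : ℕ) (h : SimpleDesignExists t v k lam)
    (Y : Finset ℕ) (hY : Y.card = v) :
    ∃ B : Finset (Finset ℕ),
      (∀ b ∈ B, b ⊆ Y ∧ b.card = k) ∧
      (∀ T ⊆ Y, T.card = t → (B.filter (fun b => T ⊆ b)).card = lam) := by
  obtain ⟨X, B, hX, hBk, hBd⟩ := h
  have hcard : X.card = Y.card := by rw [hX, hY]
  set e := Finset.equivOfCardEq hcard with he
  set f : ℕ → ℕ := fun n => if h : n ∈ X then (e ⟨n, h⟩ : ℕ) else 0 with hf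
  set g : ℕ → ℕ := fun n => if h : n ∈ Y then (e.symm ⟨n, h⟩ : ℕ) else 0 with hg
  have hfY : ∀ x ∈ X, f x ∈ Y := by
    intro x hx
    simp only [hf, dif_pos hx]
    exact (e ⟨x, hx⟩).2
  have hgX : ∀ y ∈ Y, g y ∈ X := by
    intro y hy
    simp only [hg, dif_pos hy]
    exact (e.symm ⟨y, hy⟩).2
  have hgf : ∀ x ∈ X, g (f x) = x := by
    intro x hx
    have h1 : f x ∈ Y := hfY x hx
    simp only [hg, dif_pos h1]
    have : (⟨f x, h1⟩ : {y // y ∈ Y}) = e ⟨x, hx⟩ := by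
      apply Subtype.ext
      simp only [hf, dif_pos hx]
    rw [this, Equiv.symm_apply_apply]
  have hfg : ∀ y ∈ Y, f (g y) = y := by
    intro y hy
    have h1 : g y ∈ X := hgX y hy
    simp only [hf, dif_pos h1]
    have : (⟨g y, h1⟩ : {x // x ∈ X}) = e.symm ⟨y, hy⟩ := by
      apply Subtype.ext
      simp only [hg, dif_pos hy]
    rw [this, Equiv.apply_symm_apply]
  have hinjX : ∀ b : Finset ℕ, b ⊆ X → ∀ b' : Finset ℕ, b' ⊆ X →
      b.image f = b'.image f → b = b' := by
    intro b hb b' hb' him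
    ext x
    have main : ∀ c c' : Finset ℕ, c ⊆ X → c' ⊆ X → c.image f = c'.image f →
        x ∈ c → x ∈ c' := by
      intro c c' hc hc' hcc hx
      have h1 : f x ∈ c'.image f := by rw [← hcc]; exact Finset.mem_image_of_mem f hx
      obtain ⟨z, hz, hfz⟩ := Finset.mem_image.mp h1
      have h2 : z = x := by
        have := congrArg g hfz
        rwa [hgf z (hc' hz), hgf x (hc hx)] at this
      rwa [← h2]
    exact ⟨main b b' hb hb' him, main b' b hb' hb him.symm⟩
  have hcardim : ∀ b : Finset ℕ, b ⊆ X → (b.image f).card = b.card := by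
    intro b hb
    apply Finset.card_image_of_injOn
    intro x hx y hy hxy
    rw [← hgf x (hb hx), ← hgf y (hb hy), hxy]
  refine ⟨B.image (fun b => b.image f), ?_, ?_⟩
  · intro b' hb'
    obtain ⟨b, hb, rfl⟩ := Finset.mem_image.mp hb'
    obtain ⟨hbX, hbc⟩ := hBk b hb
    constructor
    · intro y hy
      obtain ⟨x, hx, rfl⟩ := Finset.mem_image.mp hy
      exact hfY x (hbX hx)
    · rw [hcardim b hbX, hbc]
  · intro T' hT' hT'c
    set T := T'.image g with hTdef
    have hTX : T ⊆ X := by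
      intro x hx
      obtain ⟨y, hy, rfl⟩ := Finset.mem_image.mp hx
      exact hgX y (hT' hy)
    have hTc : T.card = t := by
      rw [hTdef, Finset.card_image_of_injOn, hT'c]
      intro x hx y hy hxy
      rw [← hfg x (hT' hx), ← hfg y (hT' hy), hxy]
    -- subset transfer
    have htrans : ∀ b : Finset ℕ, b ⊆ X → (T ⊆ b ↔ T' ⊆ b.image f) := by
      intro b hbX
      constructor
      · intro hTb y hy
        have : g y ∈ T := Finset.mem_image_of_mem g hy
        have : g y ∈ b := hTb this
        have := Finset.mem_image_of_mem f this
        rwa [hfg y (hT' hy)] at this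
      · intro hTb x hx
        obtain ⟨y, hy, rfl⟩ := Finset.mem_image.mp hx
        have : y ∈ b.image f := hTb hy
        obtain ⟨z, hz, rfl⟩ := Finset.mem_image.mp this
        rwa [hgf z (hbX hz)]
    have key : (B.image (fun b => b.image f)).filter (fun b => T' ⊆ b)
        = (B.filter (fun b => T ⊆ b)).image (fun b => b.image f) := by
      ext b'
      simp only [Finset.mem_filter, Finset.mem_image]
      constructor
      · rintro ⟨⟨b, hb, rfl⟩, hsub⟩
        exact ⟨b, ⟨hb, (htrans b (hBk b hb).1).mpr hsub⟩, rfl⟩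
      · rintro ⟨b, ⟨hb, hTb⟩, rfl⟩
        exact ⟨⟨b, hb, rfl⟩, (htrans b (hBk b hb).1).mp hTb⟩
    rw [key, Finset.card_image_of_injOn, hBd T hTX hTc]
    intro b hb b' hb' him
    simp only [Finset.coe_filter, Set.mem_setOf_eq] at hb hb'
    exact hinjX b (hBk b hb.1).1 b' (hBk b' hb'.1).1 him

lemma design_lower_val (X : Finset ℕ) (B : Finset (Finset ℕ)) (k lam : ℕ)
    (hB : ∀ b ∈ B, b ⊆ X ∧ b.card = k)
    (hdes : ∀ T ⊆ X, T.card = 4 → (B.filter (fun b => T ⊆ b)).card = lam)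
    (hk4 : 4 ≤ k) (T : Finset ℕ) (hT : T ⊆ X) (j : ℕ) (hTc : T.card = j) (hj : j ≤ 4)
    (c : ℕ) (hc : (X.card - j).choose (4 - j) * lam = c * (k - j).choose (4 - j))
    (hpos : 0 < (k - j).choose (4 - j)) :
    (B.filter (fun b => T ⊆ b)).card = c := by
  have h := design_lower X B k lam hB hdes hk4 T hT j hTc hj
  rw [hc] at h
  exact Nat.eq_of_mul_eq_mul_right hpos h

theorem designExists_4_35_9_414
    (h1 : SimpleDesignExists 4 17 5 4)
    (h2 : SimpleDesignExists 4 17 7 84)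
    (h3 : SimpleDesignExists 4 17 8 50)
    (h4 : SimpleDesignExists 4 17 9 90)
    (h5 : SimpleDesignExists 4 18 6 28)
    (h6 : SimpleDesignExists 4 18 8 294)
    (h7 : SimpleDesignExists 4 18 9 140)
    : SimpleDesignExists 4 35 9 26082 := by
  set X : Finset ℕ := Finset.range 17 with hXdef
  set Y : Finset ℕ := Finset.Ico 17 35 with hYdef
  have hXc : X.card = 17 := by simp [hXdef]
  have hYc : Y.card = 18 := by simp [hYdef]
  have hdXY : Disjoint X Y := by
    rw [hXdef, hYdef, Finset.range_eq_Ico]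
    exact Finset.Ico_disjoint_Ico_consecutive 0 17 35
  have hXY : X ∪ Y = Finset.range 35 := by
    rw [hXdef, hYdef, Finset.range_eq_Ico]
    exact Finset.Ico_union_Ico_eq_Ico (by norm_num) (by norm_num)
  obtain ⟨D5, hD5b, hD5d⟩ := transport 4 17 5 4 h1 X hXc
  obtain ⟨D7, hD7b, hD7d⟩ := transport 4 17 7 84 h2 X hXc
  obtain ⟨D8, hD8b, hD8d⟩ := transport 4 17 8 50 h3 X hXc
  obtain ⟨D9, hD9b, hD9d⟩ := transport 4 17 9 90 h4 X hXc
  obtain ⟨E6, hE6b, hE6d⟩ := transport 4 18 6 28 h5 Y hYc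
  obtain ⟨E8, hE8b, hE8d⟩ := transport 4 18 8 294 h6 Y hYc
  obtain ⟨E9, hE9b, hE9d⟩ := transport 4 18 9 140 h7 Y hYc
  have hCX : ∀ s : ℕ, ∀ A ∈ X.powersetCard s, A ⊆ X ∧ A.card = s :=
    fun s A hA => Finset.mem_powersetCard.mp hA
  have hCY : ∀ s : ℕ, ∀ A ∈ Y.powersetCard s, A ⊆ Y ∧ A.card = s :=
    fun s A hA => Finset.mem_powersetCard.mp hA
  set P1 := prodFam (X.powersetCard 0) E9 with hP1def
  set P2 := prodFam (X.powersetCard 1) E8 with hP2def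
  set P3 := prodFam (X.powersetCard 3) E6 with hP3def
  set P4 := prodFam D5 (Y.powersetCard 4) with hP4def
  set P5 := prodFam D7 (Y.powersetCard 2) with hP5def
  set P6 := prodFam D8 (Y.powersetCard 1) with hP6def
  set P7 := prodFam D9 (Y.powersetCard 0) with hP7def
  have bp1 : ∀ b ∈ P1, b ⊆ X ∪ Y ∧ b.card = 0 + 9 ∧ (b ∩ X).card = 0 :=
    prodFam_block X Y hdXY (X.powersetCard 0) E9 0 9 (hCX 0) hE9b
  have bp2 : ∀ b ∈ P2, b ⊆ X ∪ Y ∧ b.card = 1 + 8 ∧ (b ∩ X).card = 1 :=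
    prodFam_block X Y hdXY (X.powersetCard 1) E8 1 8 (hCX 1) hE8b
  have bp3 : ∀ b ∈ P3, b ⊆ X ∪ Y ∧ b.card = 3 + 6 ∧ (b ∩ X).card = 3 :=
    prodFam_block X Y hdXY (X.powersetCard 3) E6 3 6 (hCX 3) hE6b
  have bp4 : ∀ b ∈ P4, b ⊆ X ∪ Y ∧ b.card = 5 + 4 ∧ (b ∩ X).card = 5 :=
    prodFam_block X Y hdXY D5 (Y.powersetCard 4) 5 4 hD5b (hCY 4)
  have bp5 : ∀ b ∈ P5, b ⊆ X ∪ Y ∧ b.card = 7 + 2 ∧ (b ∩ X).card = 7 :=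
    prodFam_block X Y hdXY D7 (Y.powersetCard 2) 7 2 hD7b (hCY 2)
  have bp6 : ∀ b ∈ P6, b ⊆ X ∪ Y ∧ b.card = 8 + 1 ∧ (b ∩ X).card = 8 :=
    prodFam_block X Y hdXY D8 (Y.powersetCard 1) 8 1 hD8b (hCY 1)
  have bp7 : ∀ b ∈ P7, b ⊆ X ∪ Y ∧ b.card = 9 + 0 ∧ (b ∩ X).card = 9 :=
    prodFam_block X Y hdXY D9 (Y.powersetCard 0) 9 0 hD9b (hCY 0)
  have hdisjPQ : ∀ (P Q : Finset (Finset ℕ)) (s1 s2 : ℕ), s1 ≠ s2 →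
      (∀ b ∈ P, (b ∩ X).card = s1) → (∀ b ∈ Q, (b ∩ X).card = s2) → Disjoint P Q := by
    intro P Q s1 s2 hne hP hQ
    rw [Finset.disjoint_left]
    intro b hbP hbQ
    have e1 := hP b hbP
    have e2 := hQ b hbQ
    omega
  have dj12 : Disjoint P1 P2 := hdisjPQ P1 P2 0 1 (by norm_num) (fun b hb => (bp1 b hb).2.2) (fun b hb => (bp2 b hb).2.2)
  have dj13 : Disjoint P1 P3 := hdisjPQ P1 P3 0 3 (by norm_num) (fun b hb => (bp1 b hb).2.2) (fun b hb => (bp3 b hb).2.2)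
  have dj14 : Disjoint P1 P4 := hdisjPQ P1 P4 0 5 (by norm_num) (fun b hb => (bp1 b hb).2.2) (fun b hb => (bp4 b hb).2.2)
  have dj15 : Disjoint P1 P5 := hdisjPQ P1 P5 0 7 (by norm_num) (fun b hb => (bp1 b hb).2.2) (fun b hb => (bp5 b hb).2.2)
  have dj16 : Disjoint P1 P6 := hdisjPQ P1 P6 0 8 (by norm_num) (fun b hb => (bp1 b hb).2.2) (fun b hb => (bp6 b hb).2.2)
  have dj17 : Disjoint P1 P7 := hdisjPQ P1 P7 0 9 (by norm_num) (fun b hb => (bp1 b hb).2.2) (fun b hb => (bp7 b hb).2.2)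
  have dj23 : Disjoint P2 P3 := hdisjPQ P2 P3 1 3 (by norm_num) (fun b hb => (bp2 b hb).2.2) (fun b hb => (bp3 b hb).2.2)
  have dj24 : Disjoint P2 P4 := hdisjPQ P2 P4 1 5 (by norm_num) (fun b hb => (bp2 b hb).2.2) (fun b hb => (bp4 b hb).2.2)
  have dj25 : Disjoint P2 P5 := hdisjPQ P2 P5 1 7 (by norm_num) (fun b hb => (bp2 b hb).2.2) (fun b hb => (bp5 b hb).2.2)
  have dj26 : Disjoint P2 P6 := hdisjPQ P2 P6 1 8 (by norm_num) (fun b hb => (bp2 b hb).2.2) (fun b hb => (bp6 b hb).2.2)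
  have dj27 : Disjoint P2 P7 := hdisjPQ P2 P7 1 9 (by norm_num) (fun b hb => (bp2 b hb).2.2) (fun b hb => (bp7 b hb).2.2)
  have dj34 : Disjoint P3 P4 := hdisjPQ P3 P4 3 5 (by norm_num) (fun b hb => (bp3 b hb).2.2) (fun b hb => (bp4 b hb).2.2)
  have dj35 : Disjoint P3 P5 := hdisjPQ P3 P5 3 7 (by norm_num) (fun b hb => (bp3 b hb).2.2) (fun b hb => (bp5 b hb).2.2)
  have dj36 : Disjoint P3 P6 := hdisjPQ P3 P6 3 8 (by norm_num) (fun b hb => (bp3 b hb).2.2) (fun b hb => (bp6 b hb).2.2)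
  have dj37 : Disjoint P3 P7 := hdisjPQ P3 P7 3 9 (by norm_num) (fun b hb => (bp3 b hb).2.2) (fun b hb => (bp7 b hb).2.2)
  have dj45 : Disjoint P4 P5 := hdisjPQ P4 P5 5 7 (by norm_num) (fun b hb => (bp4 b hb).2.2) (fun b hb => (bp5 b hb).2.2)
  have dj46 : Disjoint P4 P6 := hdisjPQ P4 P6 5 8 (by norm_num) (fun b hb => (bp4 b hb).2.2) (fun b hb => (bp6 b hb).2.2)
  have dj47 : Disjoint P4 P7 := hdisjPQ P4 P7 5 9 (by norm_num) (fun b hb => (bp4 b hb).2.2) (fun b hb => (bp7 b hb).2.2)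
  have dj56 : Disjoint P5 P6 := hdisjPQ P5 P6 7 8 (by norm_num) (fun b hb => (bp5 b hb).2.2) (fun b hb => (bp6 b hb).2.2)
  have dj57 : Disjoint P5 P7 := hdisjPQ P5 P7 7 9 (by norm_num) (fun b hb => (bp5 b hb).2.2) (fun b hb => (bp7 b hb).2.2)
  have dj67 : Disjoint P6 P7 := hdisjPQ P6 P7 8 9 (by norm_num) (fun b hb => (bp6 b hb).2.2) (fun b hb => (bp7 b hb).2.2)
  refine ⟨Finset.range 35, P1 ∪ P2 ∪ P3 ∪ P4 ∪ P5 ∪ P6 ∪ P7, Finset.card_range 35, ?_, ?_⟩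
  · intro b hb
    simp only [Finset.mem_union] at hb
    rcases hb with (((((hb | hb) | hb) | hb) | hb) | hb) | hb
    · obtain ⟨hs, hc, -⟩ := bp1 b hb
      exact ⟨by rw [← hXY]; exact hs, by omega⟩
    · obtain ⟨hs, hc, -⟩ := bp2 b hb
      exact ⟨by rw [← hXY]; exact hs, by omega⟩
    · obtain ⟨hs, hc, -⟩ := bp3 b hb
      exact ⟨by rw [← hXY]; exact hs, by omega⟩
    · obtain ⟨hs, hc, -⟩ := bp4 b hb
      exact ⟨by rw [← hXY]; exact hs, by omega⟩
    · obtain ⟨hs, hc, -⟩ := bp5 b hb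
      exact ⟨by rw [← hXY]; exact hs, by omega⟩
    · obtain ⟨hs, hc, -⟩ := bp6 b hb
      exact ⟨by rw [← hXY]; exact hs, by omega⟩
    · obtain ⟨hs, hc, -⟩ := bp7 b hb
      exact ⟨by rw [← hXY]; exact hs, by omega⟩
  · intro T hTsub hTc
    have hTXY : T ⊆ X ∪ Y := by rw [hXY]; exact hTsub
    have hT1X : T ∩ X ⊆ X := Finset.inter_subset_right
    have hT2Y : T ∩ Y ⊆ Y := Finset.inter_subset_right
    have hsplit : (T ∩ X).card + (T ∩ Y).card = 4 := by
      have hun : (T ∩ X) ∪ (T ∩ Y) = T := by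
        rw [← Finset.inter_union_distrib_left]
        exact Finset.inter_eq_left.mpr hTXY
      have hdis : Disjoint (T ∩ X) (T ∩ Y) := Finset.disjoint_left.mpr
        (fun u hu hu2 => Finset.disjoint_left.mp hdXY (hT1X hu) (hT2Y hu2))
      rw [← Finset.card_union_of_disjoint hdis, hun, hTc]
    rw [Finset.filter_union, Finset.filter_union, Finset.filter_union,
      Finset.filter_union, Finset.filter_union, Finset.filter_union]
    have hW2 : Disjoint ((P1.filter (fun b => T ⊆ b))) (P2.filter (fun b => T ⊆ b)) := (Finset.disjoint_filter_filter dj12)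
    have hW3 : Disjoint ((P1.filter (fun b => T ⊆ b)) ∪ (P2.filter (fun b => T ⊆ b))) (P3.filter (fun b => T ⊆ b)) := by
      simp only [Finset.disjoint_union_left]
      exact ⟨(Finset.disjoint_filter_filter dj13), Finset.disjoint_filter_filter dj23⟩
    have hW4 : Disjoint ((P1.filter (fun b => T ⊆ b)) ∪ (P2.filter (fun b => T ⊆ b)) ∪ (P3.filter (fun b => T ⊆ b))) (P4.filter (fun b => T ⊆ b)) := by
      simp only [Finset.disjoint_union_left]
      exact ⟨⟨(Finset.disjoint_filter_filter dj14), Finset.disjoint_filter_filter dj24⟩, Finset.disjoint_filter_filter dj34⟩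
    have hW5 : Disjoint ((P1.filter (fun b => T ⊆ b)) ∪ (P2.filter (fun b => T ⊆ b)) ∪ (P3.filter (fun b => T ⊆ b)) ∪ (P4.filter (fun b => T ⊆ b))) (P5.filter (fun b => T ⊆ b)) := by
      simp only [Finset.disjoint_union_left]
      exact ⟨⟨⟨(Finset.disjoint_filter_filter dj15), Finset.disjoint_filter_filter dj25⟩, Finset.disjoint_filter_filter dj35⟩, Finset.disjoint_filter_filter dj45⟩
    have hW6 : Disjoint ((P1.filter (fun b => T ⊆ b)) ∪ (P2.filter (fun b => T ⊆ b)) ∪ (P3.filter (fun b => T ⊆ b)) ∪ (P4.filter (fun b => T ⊆ b)) ∪ (P5.filter (fun b => T ⊆ b))) (P6.filter (fun b => T ⊆ b)) := by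
      simp only [Finset.disjoint_union_left]
      exact ⟨⟨⟨⟨(Finset.disjoint_filter_filter dj16), Finset.disjoint_filter_filter dj26⟩, Finset.disjoint_filter_filter dj36⟩, Finset.disjoint_filter_filter dj46⟩, Finset.disjoint_filter_filter dj56⟩
    have hW7 : Disjoint ((P1.filter (fun b => T ⊆ b)) ∪ (P2.filter (fun b => T ⊆ b)) ∪ (P3.filter (fun b => T ⊆ b)) ∪ (P4.filter (fun b => T ⊆ b)) ∪ (P5.filter (fun b => T ⊆ b)) ∪ (P6.filter (fun b => T ⊆ b))) (P7.filter (fun b => T ⊆ b)) := by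
      simp only [Finset.disjoint_union_left]
      exact ⟨⟨⟨⟨⟨(Finset.disjoint_filter_filter dj17), Finset.disjoint_filter_filter dj27⟩, Finset.disjoint_filter_filter dj37⟩, Finset.disjoint_filter_filter dj47⟩, Finset.disjoint_filter_filter dj57⟩, Finset.disjoint_filter_filter dj67⟩
    rw [Finset.card_union_of_disjoint hW7,
      Finset.card_union_of_disjoint hW6,
      Finset.card_union_of_disjoint hW5,
      Finset.card_union_of_disjoint hW4,
      Finset.card_union_of_disjoint hW3,
      Finset.card_union_of_disjoint hW2]
    rw [show (P1.filter (fun b => T ⊆ b)).card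
        = ((X.powersetCard 0).filter (fun A => T ∩ X ⊆ A)).card *
          (E9.filter (fun C => T ∩ Y ⊆ C)).card from
      prodFam_count X Y hdXY (X.powersetCard 0) E9 (fun A hA => (hCX 0 A hA).1) (fun A hA => (hE9b A hA).1) T hTXY]
    rw [show (P2.filter (fun b => T ⊆ b)).card
        = ((X.powersetCard 1).filter (fun A => T ∩ X ⊆ A)).card *
          (E8.filter (fun C => T ∩ Y ⊆ C)).card from
      prodFam_count X Y hdXY (X.powersetCard 1) E8 (fun A hA => (hCX 1 A hA).1) (fun A hA => (hE8b A hA).1) T hTXY]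
    rw [show (P3.filter (fun b => T ⊆ b)).card
        = ((X.powersetCard 3).filter (fun A => T ∩ X ⊆ A)).card *
          (E6.filter (fun C => T ∩ Y ⊆ C)).card from
      prodFam_count X Y hdXY (X.powersetCard 3) E6 (fun A hA => (hCX 3 A hA).1) (fun A hA => (hE6b A hA).1) T hTXY]
    rw [show (P4.filter (fun b => T ⊆ b)).card
        = (D5.filter (fun A => T ∩ X ⊆ A)).card *
          ((Y.powersetCard 4).filter (fun C => T ∩ Y ⊆ C)).card from
      prodFam_count X Y hdXY D5 (Y.powersetCard 4) (fun A hA => (hD5b A hA).1) (fun A hA => (hCY 4 A hA).1) T hTXY]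
    rw [show (P5.filter (fun b => T ⊆ b)).card
        = (D7.filter (fun A => T ∩ X ⊆ A)).card *
          ((Y.powersetCard 2).filter (fun C => T ∩ Y ⊆ C)).card from
      prodFam_count X Y hdXY D7 (Y.powersetCard 2) (fun A hA => (hD7b A hA).1) (fun A hA => (hCY 2 A hA).1) T hTXY]
    rw [show (P6.filter (fun b => T ⊆ b)).card
        = (D8.filter (fun A => T ∩ X ⊆ A)).card *
          ((Y.powersetCard 1).filter (fun C => T ∩ Y ⊆ C)).card from
      prodFam_count X Y hdXY D8 (Y.powersetCard 1) (fun A hA => (hD8b A hA).1) (fun A hA => (hCY 1 A hA).1) T hTXY]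
    rw [show (P7.filter (fun b => T ⊆ b)).card
        = (D9.filter (fun A => T ∩ X ⊆ A)).card *
          ((Y.powersetCard 0).filter (fun C => T ∩ Y ⊆ C)).card from
      prodFam_count X Y hdXY D9 (Y.powersetCard 0) (fun A hA => (hD9b A hA).1) (fun A hA => (hCY 0 A hA).1) T hTXY]
    have hicases : (T ∩ X).card = 0 ∨ (T ∩ X).card = 1 ∨ (T ∩ X).card = 2 ∨
        (T ∩ X).card = 3 ∨ (T ∩ X).card = 4 := by omega
    rcases hicases with hi | hi | hi | hi | hi
    · have hi2 : (T ∩ Y).card = 4 := by omega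
      have f1 : ((X.powersetCard 0).filter (fun A => T ∩ X ⊆ A)).card = 1 := by
        rw [count_subsets X (T ∩ X) 0 0 hT1X hi (by norm_num), hXc]
        decide
      have f2 : (E9.filter (fun A => T ∩ Y ⊆ A)).card = 140 :=
        design_lower_val Y E9 9 140 hE9b hE9d (by norm_num) (T ∩ Y) hT2Y 4 hi2 (by norm_num) 140 (by rw [hYc]; decide) (by decide)
      have f3 : ((X.powersetCard 1).filter (fun A => T ∩ X ⊆ A)).card = 17 := by
        rw [count_subsets X (T ∩ X) 1 0 hT1X hi (by norm_num), hXc]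
        decide
      have f4 : (E8.filter (fun A => T ∩ Y ⊆ A)).card = 294 :=
        design_lower_val Y E8 8 294 hE8b hE8d (by norm_num) (T ∩ Y) hT2Y 4 hi2 (by norm_num) 294 (by rw [hYc]; decide) (by decide)
      have f5 : ((X.powersetCard 3).filter (fun A => T ∩ X ⊆ A)).card = 680 := by
        rw [count_subsets X (T ∩ X) 3 0 hT1X hi (by norm_num), hXc]
        decide
      have f6 : (E6.filter (fun A => T ∩ Y ⊆ A)).card = 28 :=
        design_lower_val Y E6 6 28 hE6b hE6d (by norm_num) (T ∩ Y) hT2Y 4 hi2 (by norm_num) 28 (by rw [hYc]; decide) (by decide)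
      have f7 : (D5.filter (fun A => T ∩ X ⊆ A)).card = 1904 :=
        design_lower_val X D5 5 4 hD5b hD5d (by norm_num) (T ∩ X) hT1X 0 hi (by norm_num) 1904 (by rw [hXc]; decide) (by decide)
      have f8 : ((Y.powersetCard 4).filter (fun A => T ∩ Y ⊆ A)).card = 1 := by
        rw [count_subsets Y (T ∩ Y) 4 4 hT2Y hi2 (by norm_num), hYc]
        decide
      have f9 : (D7.filter (fun A => T ∩ X ⊆ A)).card = 5712 :=
        design_lower_val X D7 7 84 hD7b hD7d (by norm_num) (T ∩ X) hT1X 0 hi (by norm_num) 5712 (by rw [hXc]; decide) (by decide)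
      have f10 : ((Y.powersetCard 2).filter (fun A => T ∩ Y ⊆ A)).card = 0 :=
        count_zero (Y.powersetCard 2) (T ∩ Y) 2 (fun A hA => (hCY 2 A hA).2) (by omega)
      have f11 : (D8.filter (fun A => T ∩ X ⊆ A)).card = 1700 :=
        design_lower_val X D8 8 50 hD8b hD8d (by norm_num) (T ∩ X) hT1X 0 hi (by norm_num) 1700 (by rw [hXc]; decide) (by decide)
      have f12 : ((Y.powersetCard 1).filter (fun A => T ∩ Y ⊆ A)).card = 0 :=
        count_zero (Y.powersetCard 1) (T ∩ Y) 1 (fun A hA => (hCY 1 A hA).2) (by omega)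
      have f13 : (D9.filter (fun A => T ∩ X ⊆ A)).card = 1700 :=
        design_lower_val X D9 9 90 hD9b hD9d (by norm_num) (T ∩ X) hT1X 0 hi (by norm_num) 1700 (by rw [hXc]; decide) (by decide)
      have f14 : ((Y.powersetCard 0).filter (fun A => T ∩ Y ⊆ A)).card = 0 :=
        count_zero (Y.powersetCard 0) (T ∩ Y) 0 (fun A hA => (hCY 0 A hA).2) (by omega)
      rw [f1, f2, f3, f4, f5, f6, f7, f8, f9, f10, f11, f12, f13, f14]
    · have hi2 : (T ∩ Y).card = 3 := by omega
      have f1 : ((X.powersetCard 0).filter (fun A => T ∩ X ⊆ A)).card = 0 :=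
        count_zero (X.powersetCard 0) (T ∩ X) 0 (fun A hA => (hCX 0 A hA).2) (by omega)
      have f2 : (E9.filter (fun A => T ∩ Y ⊆ A)).card = 350 :=
        design_lower_val Y E9 9 140 hE9b hE9d (by norm_num) (T ∩ Y) hT2Y 3 hi2 (by norm_num) 350 (by rw [hYc]; decide) (by decide)
      have f3 : ((X.powersetCard 1).filter (fun A => T ∩ X ⊆ A)).card = 1 := by
        rw [count_subsets X (T ∩ X) 1 1 hT1X hi (by norm_num), hXc]
        decide
      have f4 : (E8.filter (fun A => T ∩ Y ⊆ A)).card = 882 :=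
        design_lower_val Y E8 8 294 hE8b hE8d (by norm_num) (T ∩ Y) hT2Y 3 hi2 (by norm_num) 882 (by rw [hYc]; decide) (by decide)
      have f5 : ((X.powersetCard 3).filter (fun A => T ∩ X ⊆ A)).card = 120 := by
        rw [count_subsets X (T ∩ X) 3 1 hT1X hi (by norm_num), hXc]
        decide
      have f6 : (E6.filter (fun A => T ∩ Y ⊆ A)).card = 140 :=
        design_lower_val Y E6 6 28 hE6b hE6d (by norm_num) (T ∩ Y) hT2Y 3 hi2 (by norm_num) 140 (by rw [hYc]; decide) (by decide)
      have f7 : (D5.filter (fun A => T ∩ X ⊆ A)).card = 560 :=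
        design_lower_val X D5 5 4 hD5b hD5d (by norm_num) (T ∩ X) hT1X 1 hi (by norm_num) 560 (by rw [hXc]; decide) (by decide)
      have f8 : ((Y.powersetCard 4).filter (fun A => T ∩ Y ⊆ A)).card = 15 := by
        rw [count_subsets Y (T ∩ Y) 4 3 hT2Y hi2 (by norm_num), hYc]
        decide
      have f9 : (D7.filter (fun A => T ∩ X ⊆ A)).card = 2352 :=
        design_lower_val X D7 7 84 hD7b hD7d (by norm_num) (T ∩ X) hT1X 1 hi (by norm_num) 2352 (by rw [hXc]; decide) (by decide)
      have f10 : ((Y.powersetCard 2).filter (fun A => T ∩ Y ⊆ A)).card = 0 :=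
        count_zero (Y.powersetCard 2) (T ∩ Y) 2 (fun A hA => (hCY 2 A hA).2) (by omega)
      have f11 : (D8.filter (fun A => T ∩ X ⊆ A)).card = 800 :=
        design_lower_val X D8 8 50 hD8b hD8d (by norm_num) (T ∩ X) hT1X 1 hi (by norm_num) 800 (by rw [hXc]; decide) (by decide)
      have f12 : ((Y.powersetCard 1).filter (fun A => T ∩ Y ⊆ A)).card = 0 :=
        count_zero (Y.powersetCard 1) (T ∩ Y) 1 (fun A hA => (hCY 1 A hA).2) (by omega)
      have f13 : (D9.filter (fun A => T ∩ X ⊆ A)).card = 900 :=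
        design_lower_val X D9 9 90 hD9b hD9d (by norm_num) (T ∩ X) hT1X 1 hi (by norm_num) 900 (by rw [hXc]; decide) (by decide)
      have f14 : ((Y.powersetCard 0).filter (fun A => T ∩ Y ⊆ A)).card = 0 :=
        count_zero (Y.powersetCard 0) (T ∩ Y) 0 (fun A hA => (hCY 0 A hA).2) (by omega)
      rw [f1, f2, f3, f4, f5, f6, f7, f8, f9, f10, f11, f12, f13, f14]
    · have hi2 : (T ∩ Y).card = 2 := by omega
      have f1 : ((X.powersetCard 0).filter (fun A => T ∩ X ⊆ A)).card = 0 :=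
        count_zero (X.powersetCard 0) (T ∩ X) 0 (fun A hA => (hCX 0 A hA).2) (by omega)
      have f2 : (E9.filter (fun A => T ∩ Y ⊆ A)).card = 800 :=
        design_lower_val Y E9 9 140 hE9b hE9d (by norm_num) (T ∩ Y) hT2Y 2 hi2 (by norm_num) 800 (by rw [hYc]; decide) (by decide)
      have f3 : ((X.powersetCard 1).filter (fun A => T ∩ X ⊆ A)).card = 0 :=
        count_zero (X.powersetCard 1) (T ∩ X) 1 (fun A hA => (hCX 1 A hA).2) (by omega)
      have f4 : (E8.filter (fun A => T ∩ Y ⊆ A)).card = 2352 :=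
        design_lower_val Y E8 8 294 hE8b hE8d (by norm_num) (T ∩ Y) hT2Y 2 hi2 (by norm_num) 2352 (by rw [hYc]; decide) (by decide)
      have f5 : ((X.powersetCard 3).filter (fun A => T ∩ X ⊆ A)).card = 15 := by
        rw [count_subsets X (T ∩ X) 3 2 hT1X hi (by norm_num), hXc]
        decide
      have f6 : (E6.filter (fun A => T ∩ Y ⊆ A)).card = 560 :=
        design_lower_val Y E6 6 28 hE6b hE6d (by norm_num) (T ∩ Y) hT2Y 2 hi2 (by norm_num) 560 (by rw [hYc]; decide) (by decide)
      have f7 : (D5.filter (fun A => T ∩ X ⊆ A)).card = 140 :=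
        design_lower_val X D5 5 4 hD5b hD5d (by norm_num) (T ∩ X) hT1X 2 hi (by norm_num) 140 (by rw [hXc]; decide) (by decide)
      have f8 : ((Y.powersetCard 4).filter (fun A => T ∩ Y ⊆ A)).card = 120 := by
        rw [count_subsets Y (T ∩ Y) 4 2 hT2Y hi2 (by norm_num), hYc]
        decide
      have f9 : (D7.filter (fun A => T ∩ X ⊆ A)).card = 882 :=
        design_lower_val X D7 7 84 hD7b hD7d (by norm_num) (T ∩ X) hT1X 2 hi (by norm_num) 882 (by rw [hXc]; decide) (by decide)
      have f10 : ((Y.powersetCard 2).filter (fun A => T ∩ Y ⊆ A)).card = 1 := by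
        rw [count_subsets Y (T ∩ Y) 2 2 hT2Y hi2 (by norm_num), hYc]
        decide
      have f11 : (D8.filter (fun A => T ∩ X ⊆ A)).card = 350 :=
        design_lower_val X D8 8 50 hD8b hD8d (by norm_num) (T ∩ X) hT1X 2 hi (by norm_num) 350 (by rw [hXc]; decide) (by decide)
      have f12 : ((Y.powersetCard 1).filter (fun A => T ∩ Y ⊆ A)).card = 0 :=
        count_zero (Y.powersetCard 1) (T ∩ Y) 1 (fun A hA => (hCY 1 A hA).2) (by omega)
      have f13 : (D9.filter (fun A => T ∩ X ⊆ A)).card = 450 :=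
        design_lower_val X D9 9 90 hD9b hD9d (by norm_num) (T ∩ X) hT1X 2 hi (by norm_num) 450 (by rw [hXc]; decide) (by decide)
      have f14 : ((Y.powersetCard 0).filter (fun A => T ∩ Y ⊆ A)).card = 0 :=
        count_zero (Y.powersetCard 0) (T ∩ Y) 0 (fun A hA => (hCY 0 A hA).2) (by omega)
      rw [f1, f2, f3, f4, f5, f6, f7, f8, f9, f10, f11, f12, f13, f14]
    · have hi2 : (T ∩ Y).card = 1 := by omega
      have f1 : ((X.powersetCard 0).filter (fun A => T ∩ X ⊆ A)).card = 0 :=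
        count_zero (X.powersetCard 0) (T ∩ X) 0 (fun A hA => (hCX 0 A hA).2) (by omega)
      have f2 : (E9.filter (fun A => T ∩ Y ⊆ A)).card = 1700 :=
        design_lower_val Y E9 9 140 hE9b hE9d (by norm_num) (T ∩ Y) hT2Y 1 hi2 (by norm_num) 1700 (by rw [hYc]; decide) (by decide)
      have f3 : ((X.powersetCard 1).filter (fun A => T ∩ X ⊆ A)).card = 0 :=
        count_zero (X.powersetCard 1) (T ∩ X) 1 (fun A hA => (hCX 1 A hA).2) (by omega)
      have f4 : (E8.filter (fun A => T ∩ Y ⊆ A)).card = 5712 :=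
        design_lower_val Y E8 8 294 hE8b hE8d (by norm_num) (T ∩ Y) hT2Y 1 hi2 (by norm_num) 5712 (by rw [hYc]; decide) (by decide)
      have f5 : ((X.powersetCard 3).filter (fun A => T ∩ X ⊆ A)).card = 1 := by
        rw [count_subsets X (T ∩ X) 3 3 hT1X hi (by norm_num), hXc]
        decide
      have f6 : (E6.filter (fun A => T ∩ Y ⊆ A)).card = 1904 :=
        design_lower_val Y E6 6 28 hE6b hE6d (by norm_num) (T ∩ Y) hT2Y 1 hi2 (by norm_num) 1904 (by rw [hYc]; decide) (by decide)
      have f7 : (D5.filter (fun A => T ∩ X ⊆ A)).card = 28 :=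
        design_lower_val X D5 5 4 hD5b hD5d (by norm_num) (T ∩ X) hT1X 3 hi (by norm_num) 28 (by rw [hXc]; decide) (by decide)
      have f8 : ((Y.powersetCard 4).filter (fun A => T ∩ Y ⊆ A)).card = 680 := by
        rw [count_subsets Y (T ∩ Y) 4 1 hT2Y hi2 (by norm_num), hYc]
        decide
      have f9 : (D7.filter (fun A => T ∩ X ⊆ A)).card = 294 :=
        design_lower_val X D7 7 84 hD7b hD7d (by norm_num) (T ∩ X) hT1X 3 hi (by norm_num) 294 (by rw [hXc]; decide) (by decide)
      have f10 : ((Y.powersetCard 2).filter (fun A => T ∩ Y ⊆ A)).card = 17 := by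
        rw [count_subsets Y (T ∩ Y) 2 1 hT2Y hi2 (by norm_num), hYc]
        decide
      have f11 : (D8.filter (fun A => T ∩ X ⊆ A)).card = 140 :=
        design_lower_val X D8 8 50 hD8b hD8d (by norm_num) (T ∩ X) hT1X 3 hi (by norm_num) 140 (by rw [hXc]; decide) (by decide)
      have f12 : ((Y.powersetCard 1).filter (fun A => T ∩ Y ⊆ A)).card = 1 := by
        rw [count_subsets Y (T ∩ Y) 1 1 hT2Y hi2 (by norm_num), hYc]
        decide
      have f13 : (D9.filter (fun A => T ∩ X ⊆ A)).card = 210 :=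
        design_lower_val X D9 9 90 hD9b hD9d (by norm_num) (T ∩ X) hT1X 3 hi (by norm_num) 210 (by rw [hXc]; decide) (by decide)
      have f14 : ((Y.powersetCard 0).filter (fun A => T ∩ Y ⊆ A)).card = 0 :=
        count_zero (Y.powersetCard 0) (T ∩ Y) 0 (fun A hA => (hCY 0 A hA).2) (by omega)
      rw [f1, f2, f3, f4, f5, f6, f7, f8, f9, f10, f11, f12, f13, f14]
    · have hi2 : (T ∩ Y).card = 0 := by omega
      have f1 : ((X.powersetCard 0).filter (fun A => T ∩ X ⊆ A)).card = 0 :=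
        count_zero (X.powersetCard 0) (T ∩ X) 0 (fun A hA => (hCX 0 A hA).2) (by omega)
      have f2 : (E9.filter (fun A => T ∩ Y ⊆ A)).card = 3400 :=
        design_lower_val Y E9 9 140 hE9b hE9d (by norm_num) (T ∩ Y) hT2Y 0 hi2 (by norm_num) 3400 (by rw [hYc]; decide) (by decide)
      have f3 : ((X.powersetCard 1).filter (fun A => T ∩ X ⊆ A)).card = 0 :=
        count_zero (X.powersetCard 1) (T ∩ X) 1 (fun A hA => (hCX 1 A hA).2) (by omega)
      have f4 : (E8.filter (fun A => T ∩ Y ⊆ A)).card = 12852 :=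
        design_lower_val Y E8 8 294 hE8b hE8d (by norm_num) (T ∩ Y) hT2Y 0 hi2 (by norm_num) 12852 (by rw [hYc]; decide) (by decide)
      have f5 : ((X.powersetCard 3).filter (fun A => T ∩ X ⊆ A)).card = 0 :=
        count_zero (X.powersetCard 3) (T ∩ X) 3 (fun A hA => (hCX 3 A hA).2) (by omega)
      have f6 : (E6.filter (fun A => T ∩ Y ⊆ A)).card = 5712 :=
        design_lower_val Y E6 6 28 hE6b hE6d (by norm_num) (T ∩ Y) hT2Y 0 hi2 (by norm_num) 5712 (by rw [hYc]; decide) (by decide)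
      have f7 : (D5.filter (fun A => T ∩ X ⊆ A)).card = 4 :=
        design_lower_val X D5 5 4 hD5b hD5d (by norm_num) (T ∩ X) hT1X 4 hi (by norm_num) 4 (by rw [hXc]; decide) (by decide)
      have f8 : ((Y.powersetCard 4).filter (fun A => T ∩ Y ⊆ A)).card = 3060 := by
        rw [count_subsets Y (T ∩ Y) 4 0 hT2Y hi2 (by norm_num), hYc]
        decide
      have f9 : (D7.filter (fun A => T ∩ X ⊆ A)).card = 84 :=
        design_lower_val X D7 7 84 hD7b hD7d (by norm_num) (T ∩ X) hT1X 4 hi (by norm_num) 84 (by rw [hXc]; decide) (by decide)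
      have f10 : ((Y.powersetCard 2).filter (fun A => T ∩ Y ⊆ A)).card = 153 := by
        rw [count_subsets Y (T ∩ Y) 2 0 hT2Y hi2 (by norm_num), hYc]
        decide
      have f11 : (D8.filter (fun A => T ∩ X ⊆ A)).card = 50 :=
        design_lower_val X D8 8 50 hD8b hD8d (by norm_num) (T ∩ X) hT1X 4 hi (by norm_num) 50 (by rw [hXc]; decide) (by decide)
      have f12 : ((Y.powersetCard 1).filter (fun A => T ∩ Y ⊆ A)).card = 18 := by
        rw [count_subsets Y (T ∩ Y) 1 0 hT2Y hi2 (by norm_num), hYc]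
        decide
      have f13 : (D9.filter (fun A => T ∩ X ⊆ A)).card = 90 :=
        design_lower_val X D9 9 90 hD9b hD9d (by norm_num) (T ∩ X) hT1X 4 hi (by norm_num) 90 (by rw [hXc]; decide) (by decide)
      have f14 : ((Y.powersetCard 0).filter (fun A => T ∩ Y ⊆ A)).card = 1 := by
        rw [count_subsets Y (T ∩ Y) 0 0 hT2Y hi2 (by norm_num), hYc]
        decide
      rw [f1, f2, f3, f4, f5, f6, f7, f8, f9, f10, f11, f12, f13, f14]
end
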